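/- arXiv:2306.15061 — 4 statements merged into one kernel-verified Lean document; each statement's English description precedes it below -/
import Mathlib

section
/- If M is a rank-r simple matroid with no U_{2,ℓ+2}-minor for some ℓ ≥ 2, then M has fewer than ℓ^r elements. -/
open Set Matroid

namespace Paper

variable {α : Type*}

/-- `a` and `b` are parallel (possibly equal) nonloops of `M`. -/
def Para (M : Matroid α) (a b : α) : Prop :=
  M.Indep {a} ∧ M.Indep {b} ∧ b ∈ M.closure {a}

/-- The rank of a matroid. -/
noncomputable def rk (M : Matroid α) : ℕ :=
  sSup {n | ∃ I, M.Indep I ∧ I.ncard = n}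

/-- `C` is a circuit of `M`: a minimal dependent set. -/
def IsCircuit (M : Matroid α) (C : Set α) : Prop :=
  M.Dep C ∧ ∀ D ⊂ C, ¬ M.Dep D

/-- A matroid is simple if every subset of size at most two is independent. -/
def Simple (M : Matroid α) : Prop :=
  ∀ X ⊆ M.E, X.Finite → X.ncard ≤ 2 → M.Indep X

/-- The number of points (parallel classes of nonloops) of `M`. -/
noncomputable def eps (M : Matroid α) : ℕ :=
  {P : Set α | ∃ a, M.Indep {a} ∧ P = {b | Para M a b}}.ncard

/-- Contraction of the set `C` from `M`, defined by duality. -/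
noncomputable def contract (M : Matroid α) (C : Set α) : Matroid α :=
  (M✶ ↾ (M.E \ C))✶

/-- `N` is a minor of `M`: obtained by contracting a set `C` (with basis `I`) and
deleting some further elements. -/
def IsMinor (N M : Matroid α) : Prop :=
  ∃ C I, C ⊆ M.E ∧ M.IsBasis I C ∧ N.E ⊆ M.E \ C ∧
    ∀ X ⊆ N.E, (N.Indep X ↔ M.Indep (X ∪ I))

/-- `M` has a minor isomorphic to the rank-2 uniform matroid `U_{2,k}`. -/
def HasUnifMinor (M : Matroid α) (k : ℕ) : Prop :=
  ∃ N, IsMinor N M ∧ N.E.Finite ∧ N.E.ncard = k ∧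
    ∀ X ⊆ N.E, (N.Indep X ↔ X.ncard ≤ 2)

/-- `M` has a restriction isomorphic to `U_{2,k}`. -/
def HasUnifRestriction (M : Matroid α) (k : ℕ) : Prop :=
  ∃ X ⊆ M.E, X.Finite ∧ X.ncard = k ∧ ∀ Y ⊆ X, (M.Indep Y ↔ Y.ncard ≤ 2)

/-- `C` is the edge set of a cycle of the simple graph `G`. -/
def GraphicCircuit {V : Type*} (G : SimpleGraph V) (C : Set (Sym2 V)) : Prop :=
  ∃ (v : V) (w : G.Walk v v), w.IsCycle ∧ C = {e | e ∈ w.edges}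

/-- `N` is isomorphic to the cycle matroid of the simple graph `G`. -/
def IsGraphicIso {V : Type*} (N : Matroid α) (G : SimpleGraph V) : Prop :=
  ∃ f : α → Sym2 V, InjOn f N.E ∧ f '' N.E = G.edgeSet ∧
    ∀ C ⊆ N.E, (IsCircuit N C ↔ GraphicCircuit G (f '' C))

/-- `M` has a minor isomorphic to the cycle matroid `M(K_t)`. -/
def HasCliqueMinor (M : Matroid α) (t : ℕ) : Prop :=
  ∃ N, IsMinor N M ∧ IsGraphicIso N (SimpleGraph.completeGraph (Fin t))

/-- A simple graph has a `K_t`-minor, via branch sets. -/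
def HasGraphCliqueMinor {V : Type*} (G : SimpleGraph V) (t : ℕ) : Prop :=
  ∃ f : V → Option (Fin t),
    (∀ i : Fin t, (G.induce {v | f v = some i}).Connected) ∧
    ∀ i j : Fin t, i ≠ j → ∃ u v, f u = some i ∧ f v = some j ∧ G.Adj u v

/-- The extremal density threshold `d(t)` for `K_t`-minors. -/
noncomputable def dthr (t : ℕ) : ℝ :=
  sInf {c : ℝ | ∀ (n : ℕ) (G : SimpleGraph (Fin n)),
    (G.edgeSet.ncard : ℝ) > c * n → HasGraphCliqueMinor G t}

/-- A multigraph: loops and parallel edges allowed. -/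
structure Multigraph (V : Type*) (E : Type*) where
  ends : E → Sym2 V

/-- A cycle in a multigraph: distinct vertices `v_0, …, v_n` and distinct edges
`e_0, …, e_n` with `e_i` joining `v_i` and `v_{i+1}` (cyclically).  The case `n = 0`
is a loop and `n = 1` a pair of parallel edges. -/
structure Cycle {V E : Type*} (G : Multigraph V E) where
  n : ℕ
  vtx : Fin (n+1) → V
  edge : Fin (n+1) → E
  vtx_inj : Function.Injective vtx
  edge_inj : Function.Injective edge
  ends_eq : ∀ i, G.ends (edge i) = s(vtx i, vtx (i+1))

/-- `C` is the edge set of a cycle of `G`. -/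
def IsCycleSet {V E : Type*} (G : Multigraph V E) (C : Set E) : Prop :=
  ∃ c : Cycle G, Set.range c.edge = C

/-- The edge set `X` induces a connected subgraph. -/
def EdgeConn {V E : Type*} (G : Multigraph V E) (X : Set E) : Prop :=
  X.Nonempty ∧ ∀ e ∈ X, ∀ f ∈ X,
    Relation.ReflTransGen (fun a b => a ∈ X ∧ b ∈ X ∧ ∃ v, v ∈ G.ends a ∧ v ∈ G.ends b) e f

/-- `X` contains (the edge sets of) at least two distinct cycles. -/
def TwoCycles {V E : Type*} (G : Multigraph V E) (X : Set E) : Prop :=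
  ∃ C₁ C₂, C₁ ⊆ X ∧ C₂ ⊆ X ∧ IsCycleSet G C₁ ∧ IsCycleSet G C₂ ∧ C₁ ≠ C₂

/-- `X` is the edge set of a minimal connected subgraph containing more than one
cycle; these are precisely the thetas and handcuffs of `G`. -/
def MinConnTwo {V E : Type*} (G : Multigraph V E) (X : Set E) : Prop :=
  EdgeConn G X ∧ TwoCycles G X ∧ ∀ Y ⊂ X, ¬ (EdgeConn G Y ∧ TwoCycles G Y)

/-- `X` is the edge set of a theta subgraph: a minimal connected subgraph with more
than one cycle that contains exactly three cycles. -/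
def IsTheta {V E : Type*} (G : Multigraph V E) (X : Set E) : Prop :=
  MinConnTwo G X ∧ {C | IsCycleSet G C ∧ C ⊆ X}.ncard = 3

/-- `(G, B)` is a biased graph: `B` is a set of cycles such that no theta contains
exactly two balanced cycles. -/
def IsBiased {V E : Type*} (G : Multigraph V E) (B : Set (Set E)) : Prop :=
  (∀ C ∈ B, IsCycleSet G C) ∧
  ∀ X, IsTheta G X → {C | C ⊆ X ∧ IsCycleSet G C ∧ C ∈ B}.ncard ≠ 2

/-- The circuits of the frame matroid `FM(G,B)`: balanced cycles, together with
thetas and handcuffs containing no balanced cycle. -/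
def FrameCircuit {V E : Type*} (G : Multigraph V E) (B : Set (Set E)) (C : Set E) : Prop :=
  (IsCycleSet G C ∧ C ∈ B) ∨ (MinConnTwo G C ∧ ∀ D ⊆ C, IsCycleSet G D → D ∉ B)

/-- `M` is the frame matroid `FM(G,B)` of the biased graph `(G,B)`: its ground set is
`E(G)` and its circuits are exactly the frame circuits. -/
def IsFM {V E : Type*} (G : Multigraph V E) (B : Set (Set E)) (M : Matroid E) : Prop :=
  M.E = univ ∧ ∀ C, IsCircuit M C ↔ FrameCircuit G B C

/-- Connectedness of a multigraph. -/
def MGConnected {V E : Type*} (G : Multigraph V E) : Prop :=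
  Nonempty V ∧ ∀ u v : V, Relation.ReflTransGen (fun a b => ∃ e, G.ends e = s(a,b)) u v

/-- `M` is framed by `B`: `B` is a base and every element is spanned by at most two
elements of `B`. -/
def IsFramed (M : Matroid α) (B : Set α) : Prop :=
  M.IsBase B ∧ ∀ e ∈ M.E, ∃ S ⊆ B, S.Finite ∧ S.ncard ≤ 2 ∧ e ∈ M.closure S

/-- A frame matroid: a restriction of a matroid framed by some set. -/
def IsFrameMatroid (M : Matroid α) : Prop :=
  ∃ (M' : Matroid α) (B R : Set α), IsFramed M' B ∧ R ⊆ M'.E ∧ M = M' ↾ R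

/-- A `B`-clique: a matroid framed by `B` in which every pair of elements of `B` lies
in a common triangle. -/
def IsBClique (M : Matroid α) (B : Set α) : Prop :=
  IsFramed M B ∧ ∀ a ∈ B, ∀ b ∈ B, a ≠ b →
    ∃ T, IsCircuit M T ∧ T.ncard = 3 ∧ a ∈ T ∧ b ∈ T

/-- Gain graphs over a group `Γ`. -/
structure GainGraph (V E Γ : Type*) [Group Γ] where
  src : E → V
  tgt : E → V
  gain : E → Γ

/-- The underlying multigraph of a gain graph. -/
def GainGraph.toMultigraph {V E Γ : Type*} [Group Γ] (G : GainGraph V E Γ) :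
    Multigraph V E :=
  ⟨fun e => s(G.src e, G.tgt e)⟩

open scoped Classical in
/-- `C` is the edge set of a balanced cycle of the gain graph `G`: the ordered product
of the gains (inverted when the edge is traversed against its direction) is `1`. -/
def GainGraph.BalancedSet {V E Γ : Type*} [Group Γ] (G : GainGraph V E Γ)
    (C : Set E) : Prop :=
  ∃ c : Cycle G.toMultigraph, Set.range c.edge = C ∧
    (List.ofFn (fun i => if G.src (c.edge i) = c.vtx i then G.gain (c.edge i)
      else (G.gain (c.edge i))⁻¹)).prod = 1

/-- `n`-towers in a matroid, indexed by the nonempty subsets of `[n] = {1, …, n}`. -/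
def IsTower (M : Matroid α) : ℕ → (Finset ℕ → α) → Prop
  | 0, _ => False
  | 1, e => M.Indep {e {1}}
  | n+2, e =>
    (∀ X : Finset ℕ, X.Nonempty → X ⊆ Finset.Icc 1 (n+1) →
       Para (contract M {e {n+2}}) (e X) (e (insert (n+2) X))) ∧
    (∃ X : Finset ℕ, X.Nonempty ∧ X ⊆ Finset.Icc 1 (n+1) ∧
       ¬ Para M (e X) (e (insert (n+2) X))) ∧
    IsTower M (n+1) e ∧ IsTower (contract M {e {n+2}}) (n+1) e ∧
    IsTower M (n+1) (fun X => e (insert (n+2) X)) ∧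
    IsTower (contract M {e {n+2}}) (n+1) (fun X => e (insert (n+2) X))

/-- Equivalence of `n`-towers: corresponding elements are parallel. -/
def TowerEquiv (M : Matroid α) (n : ℕ) (e e' : Finset ℕ → α) : Prop :=
  ∀ X : Finset ℕ, X.Nonempty → X ⊆ Finset.Icc 1 n → Para M (e X) (e' X)

/-- `w M i` is the number of equivalence classes of `i`-towers of `M` (for `i ≥ 1`),
with `w M 0 = r(M)`. -/
noncomputable def w (M : Matroid α) (i : ℕ) : ℕ :=
  if i = 0 then rk M else
    {s : Set (Finset ℕ → α) | ∃ e, IsTower M i e ∧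
      s = {e' | IsTower M i e' ∧ TowerEquiv M i e e'}}.ncard

/-- `G` is the projective geometry matroid on the projectivization of `W`:
a set of projective points is independent iff it admits a linearly independent
choice of representatives. -/
def IsPG {F : Type*} [Field F] {W : Type*} [AddCommGroup W] [Module F W]
    (G : Matroid (Projectivization F W)) : Prop :=
  G.E = univ ∧ ∀ I : Set (Projectivization F W),
    G.Indep I ↔ Projectivization.Independent (fun x : I => x.1)


variable {M : Matroid α} {I J : Set α}

lemma indep_ncard_le_rk (hfin : M.E.Finite) (hI : M.Indep I) : I.ncard ≤ rk M :=
  le_csSup ⟨M.E.ncard, fun n hn => by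
    obtain ⟨J, hJ, rfl⟩ := hn; exact Set.ncard_le_ncard hJ.subset_ground hfin⟩ ⟨I, hI, rfl⟩

lemma rk_le_of (n : ℕ) (h : ∀ I, M.Indep I → I.ncard ≤ n) : rk M ≤ n :=
  csSup_le ⟨0, ∅, M.empty_indep, by simp⟩ (fun m hm => by
    obtain ⟨J, hJ, rfl⟩ := hm; exact h J hJ)

lemma indep_ncard_le_of_subset_closure (hfin : M.E.Finite)
    (hI : M.Indep I) (hJ : M.Indep J) (hsub : I ⊆ M.closure J) : I.ncard ≤ J.ncard := by
  by_contra h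
  push_neg at h
  have hIfin := hfin.subset hI.subset_ground
  have hJfin := hfin.subset hJ.subset_ground
  obtain ⟨x, hx, hxi⟩ := hJ.augment hI (by
    rw [← hJfin.cast_ncard_eq, ← hIfin.cast_ncard_eq, Nat.cast_lt]; exact h)
  rw [hJ.insert_indep_iff_of_notMem hx.2] at hxi
  exact hxi.2 (hsub hx.1)

lemma indep_ncard_le_of_subset_closure' (hfin : M.E.Finite) {P : Set α}
    (hI : M.Indep I) (hP : P ⊆ M.E) (hPfin : P.Finite) (hsub : I ⊆ M.closure P) :
    I.ncard ≤ P.ncard := by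
  obtain ⟨J, hJ⟩ := M.exists_isBasis P hP
  have h1 := indep_ncard_le_of_subset_closure hfin hI hJ.indep
    (by rwa [hJ.closure_eq_closure])
  exact h1.trans (Set.ncard_le_ncard hJ.subset hPfin)

lemma ncard_biUnion_le {β : Type*} (F : Finset β) (t : β → Set α) (k : ℕ)
    (ht : ∀ s ∈ F, (t s).Finite ∧ (t s).ncard ≤ k) :
    (⋃ s ∈ (F : Set β), t s).ncard ≤ k * F.card := by
  classical
  induction F using Finset.induction with
  | empty => simp
  | @insert a F ha IH =>
    push_cast
    rw [Set.biUnion_insert]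
    have hfa := (ht a (Finset.mem_insert_self a F)).1
    have hFfin : (⋃ s ∈ (F : Set β), t s).Finite :=
      Set.Finite.biUnion F.finite_toSet (fun s hs => (ht s (Finset.mem_insert_of_mem hs)).1)
    calc (t a ∪ ⋃ s ∈ (F : Set β), t s).ncard
        ≤ (t a).ncard + (⋃ s ∈ (F : Set β), t s).ncard := Set.ncard_union_le _ _
      _ ≤ k + k * F.card := by
          exact Nat.add_le_add (ht a (Finset.mem_insert_self a F)).2
            (IH (fun s hs => ht s (Finset.mem_insert_of_mem hs)))
      _ = k * (insert a F).card := by rw [Finset.card_insert_of_notMem ha]; ring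

set_option maxHeartbeats 1000000 in
lemma key (ℓ : ℕ) (hℓ : 2 ≤ ℓ) :
    ∀ (n : ℕ) (M : Matroid α), M.E.Finite → Simple M → rk M ≤ n →
      ¬ HasUnifMinor M (ℓ + 2) → M.E.ncard < ℓ ^ n := by
  intro n
  induction n with
  | zero =>
    intro M hfin hs hr _
    have hE : M.E = ∅ := by
      by_contra h
      obtain ⟨e, he⟩ := nonempty_iff_ne_empty.mpr h
      have h1 : M.Indep {e} := hs {e} (by simpa) (finite_singleton e) (by simp)
      have h2 := indep_ncard_le_rk hfin h1
      rw [Set.ncard_singleton] at h2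
      omega
    simp [hE]
  | succ n IH =>
    intro M hfin hs hr hU
    classical
    by_cases hE : M.E = ∅
    · rw [hE]
      simpa using pow_pos (show 0 < ℓ by omega) (n + 1)
    obtain ⟨e, he⟩ := nonempty_iff_ne_empty.mpr hE
    have heE : ({e} : Set α) ⊆ M.E := by simpa
    have hse : M.Indep {e} := hs {e} heE (finite_singleton e) (by simp)
    have hecl : e ∈ M.closure {e} := M.mem_closure_of_mem rfl heE
    set D : Set α := M.E \ M.closure {e} with hD
    have hpair : ∀ a ∈ D, M.Indep (insert a {e}) := by
      intro a ha
      rw [hse.insert_indep_iff_of_notMem (by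
        simp only [mem_singleton_iff]; rintro rfl; exact ha.2 hecl)]
      exact ⟨ha.1, ha.2⟩
    have hnotcl : ∀ f ∈ M.E, f ≠ e → f ∈ D := by
      intro f hf hfe
      refine ⟨hf, fun hfcl => ?_⟩
      have h2 : M.Indep (insert f {e}) :=
        hs _ (insert_subset hf heE) ((finite_singleton e).insert f)
          ((Set.ncard_insert_le _ _).trans (by simp))
      rw [hse.insert_indep_iff_of_notMem (by simpa)] at h2
      exact h2.2 hfcl
    set lineOf : α → Set α := fun f => M.closure (insert f {e}) with hlineOf
    set Lines : Set (Set α) := lineOf '' D with hLines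
    have hex : ∀ L ∈ Lines, ∃ f, f ∈ D ∧ lineOf f = L := fun L hL => by
      obtain ⟨f, hf, h⟩ := hL; exact ⟨f, hf, h⟩
    set rep : Set α → α := fun L => if h : ∃ f, f ∈ D ∧ lineOf f = L then h.choose else e
      with hrepdef
    have hrepD : ∀ L ∈ Lines, rep L ∈ D ∧ lineOf (rep L) = L := by
      intro L hL
      obtain ⟨f, hf⟩ := hex L hL
      have hh : ∃ f, f ∈ D ∧ lineOf f = L := ⟨f, hf⟩
      simp only [hrepdef, dif_pos hh]
      exact hh.choose_spec
    set S : Set α := rep '' Lines with hS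
    have hSD : S ⊆ D := by rintro s ⟨L, hL, rfl⟩; exact (hrepD L hL).1
    have hSE : S ⊆ M.E := fun s hs' => (hSD hs').1
    have hSfin : S.Finite := hfin.subset hSE
    have heS : e ∉ S := fun h => (hSD h).2 hecl
    have hSinj : ∀ s ∈ S, ∀ t ∈ S, lineOf s = lineOf t → s = t := by
      rintro s ⟨L1, hL1, rfl⟩ t ⟨L2, hL2, rfl⟩ hst
      rw [(hrepD L1 hL1).2, (hrepD L2 hL2).2] at hst
      rw [hst]
    have hcover : ∀ f ∈ D, ∃ s ∈ S, f ∈ lineOf s := by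
      intro f hf
      have hL : lineOf f ∈ Lines := ⟨f, hf, rfl⟩
      refine ⟨rep (lineOf f), ⟨_, hL, rfl⟩, ?_⟩
      rw [(hrepD _ hL).2]
      exact M.mem_closure_of_mem (mem_insert f {e}) (insert_subset hf.1 heE)
    -- the simplified contraction N
    set NInd : Set α → Prop := fun X => X ⊆ S ∧ M.Indep (insert e X) with hNInd
    have hNempty : NInd ∅ := ⟨empty_subset _, by simpa using hse⟩
    have hNsubset : ∀ ⦃I J⦄, NInd J → I ⊆ J → NInd I := fun I J hJ hIJ =>
      ⟨hIJ.trans hJ.1, hJ.2.subset (insert_subset_insert hIJ)⟩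
    have hNaug : ∀ ⦃I J⦄, NInd I → NInd J → I.ncard < J.ncard →
        ∃ x ∈ J, x ∉ I ∧ NInd (insert x I) := by
      intro I J hI hJ hIJ
      have hIfin : I.Finite := hSfin.subset hI.1
      have hJfin : J.Finite := hSfin.subset hJ.1
      have heI : e ∉ I := fun h => heS (hI.1 h)
      have heJ : e ∉ J := fun h => heS (hJ.1 h)
      obtain ⟨x, hx, hxi⟩ := hI.2.augment hJ.2 (by
        rw [← (hIfin.insert e).cast_ncard_eq, ← (hJfin.insert e).cast_ncard_eq, Nat.cast_lt,
          Set.ncard_insert_of_notMem heI hIfin, Set.ncard_insert_of_notMem heJ hJfin]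
        omega)
      have hxe : x ≠ e := fun h => hx.2 (h ▸ mem_insert e I)
      have hxJ : x ∈ J := (mem_insert_iff.mp hx.1).resolve_left hxe
      refine ⟨x, hxJ, fun h => hx.2 (mem_insert_of_mem _ h),
        insert_subset (hJ.1 hxJ) hI.1, ?_⟩
      rw [Set.insert_comm]
      exact hxi
    set N : Matroid α :=
      (IndepMatroid.ofFinite hSfin NInd hNempty hNsubset hNaug (fun I hI => hI.1)).matroid
      with hN
    have hNE : N.E = S := rfl
    have hNind : ∀ X, N.Indep X ↔ NInd X := fun X => by
      rw [hN]; exact IndepMatroid.matroid_indep_iff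
    -- N is simple
    have hNsimple : Simple N := by
      intro X hX hXfin hX2
      rw [hNE] at hX
      rw [hNind]
      refine ⟨hX, ?_⟩
      have h3 : X.ncard = 0 ∨ X.ncard = 1 ∨ X.ncard = 2 := by omega
      rcases h3 with h3 | h3 | h3
      · rw [(Set.ncard_eq_zero hXfin).mp h3]
        simpa using hse
      · obtain ⟨a, rfl⟩ := Set.ncard_eq_one.mp h3
        have haD : a ∈ D := hSD (hX rfl)
        have h4 := hpair a haD
        have h4' : (insert e {a} : Set α) = insert a {e} := by ext x; simp; tauto
        rwa [h4']
      · obtain ⟨a, b, hab, rfl⟩ := Set.ncard_eq_two.mp h3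
        have haS : a ∈ S := hX (mem_insert a {b})
        have hbS : b ∈ S := hX (mem_insert_of_mem a rfl)
        have haD := hSD haS
        have hbD := hSD hbS
        have hIndab : M.Indep (insert a {e}) := hpair a haD
        have hbe : b ≠ e := by rintro rfl; exact hbD.2 hecl
        have hbcl : b ∉ M.closure (insert a {e}) := by
          intro hb
          have hacl : a ∈ M.closure (insert b {e}) := (M.closure_exchange ⟨hb, hbD.2⟩).1
          have heclb : e ∈ M.closure (insert b {e}) :=
            M.mem_closure_of_mem (mem_insert_of_mem b rfl) (insert_subset hbD.1 heE)
          have hecla : e ∈ M.closure (insert a {e}) :=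
            M.mem_closure_of_mem (mem_insert_of_mem a rfl) (insert_subset haD.1 heE)
          have hsub1 : M.closure (insert a {e}) ⊆ M.closure (insert b {e}) :=
            M.closure_subset_closure_of_subset_closure
              (insert_subset hacl (singleton_subset_iff.mpr heclb))
          have hsub2 : M.closure (insert b {e}) ⊆ M.closure (insert a {e}) :=
            M.closure_subset_closure_of_subset_closure
              (insert_subset hb (singleton_subset_iff.mpr hecla))
          exact hab (hSinj a haS b hbS (hsub1.antisymm hsub2))
        have hbmem : b ∉ (insert a {e} : Set α) := by simp [hab.symm, hbe]
        have h5 : M.Indep (insert b (insert a {e})) := by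
          rw [hIndab.insert_indep_iff_of_notMem hbmem]
          exact ⟨hbD.1, hbcl⟩
        have h6 : (insert e {a, b} : Set α) = insert b (insert a {e}) := by
          ext x; simp; tauto
        rwa [h6]
    -- rank of N
    have hrkN : rk N ≤ n := by
      apply rk_le_of
      intro I hI
      rw [hNind] at hI
      have heI : e ∉ I := fun h => heS (hI.1 h)
      have hIfin : I.Finite := hSfin.subset hI.1
      have h1 := indep_ncard_le_rk hfin hI.2
      rw [Set.ncard_insert_of_notMem heI hIfin] at h1
      omega
    -- no uniform minor
    have hNU : ¬ HasUnifMinor N (ℓ + 2) := by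
      rintro ⟨N', ⟨C, I, hC, hbasis, hN'E, hind⟩, hrest⟩
      rw [hNE] at hC hN'E
      rw [isBasis_iff'] at hbasis
      obtain ⟨⟨hIind, hIC, hmax⟩, hCN⟩ := hbasis
      rw [hNind] at hIind
      obtain ⟨hIS, hIe⟩ := hIind
      refine hU ⟨N', ⟨insert e C, insert e I, insert_subset he (hC.trans hSE), ?_, ?_, ?_⟩,
        hrest⟩
      · rw [isBasis_iff']
        refine ⟨⟨hIe, insert_subset_insert hIC, ?_⟩, insert_subset he (hC.trans hSE)⟩
        intro J hJ hIJ hJC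
        have heJ : e ∈ J := hIJ (mem_insert e I)
        have hJeq : insert e (J \ {e}) = J := by
          rw [insert_diff_singleton, insert_eq_of_mem heJ]
        have hJC' : J \ {e} ⊆ C := fun x hx =>
          (mem_insert_iff.mp (hJC hx.1)).resolve_left (by simpa using hx.2)
        have hNJ : N.Indep (J \ {e}) := (hNind _).mpr ⟨hJC'.trans hC, by rwa [hJeq]⟩
        have hIJ' : I ⊆ J \ {e} := fun x hx =>
          ⟨hIJ (mem_insert_of_mem _ hx), by
            simp only [mem_singleton_iff]; rintro rfl; exact heS (hIS hx)⟩
        have h4 := hmax hNJ hIJ' hJC'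
        rw [h4]
        exact hJeq
      · intro x hx
        obtain ⟨hxS, hxC⟩ := hN'E hx
        exact ⟨hSE hxS, fun h =>
          (mem_insert_iff.mp h).elim (fun h' => heS (h' ▸ hxS)) hxC⟩
      · intro X hX
        rw [hind X hX, hNind, Set.union_insert]
        have hXS : X ⊆ S := hX.trans (fun x hx => (hN'E hx).1)
        exact ⟨fun h => h.2, fun h => ⟨union_subset hXS (hIC.trans hC), h⟩⟩
    have hScard : S.ncard < ℓ ^ n := by
      have h7 := IH N hSfin hNsimple hrkN hNU
      rwa [hNE] at h7
    -- bounding the lines through e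
    set A : α → Set α := fun s => (M.E ∩ lineOf s) \ {e} with hA
    have hAbound : ∀ s ∈ S, (A s).Finite ∧ (A s).ncard ≤ ℓ := by
      intro s hsS
      have hsE : s ∈ M.E := hSE hsS
      have hseE : insert s {e} ⊆ M.E := insert_subset hsE heE
      have hBfin : (M.E ∩ lineOf s).Finite := hfin.inter_of_left _
      have hB : (M.E ∩ lineOf s).ncard ≤ ℓ + 1 := by
        by_contra hcon
        push_neg at hcon
        obtain ⟨X, hXB, hXcard⟩ := Set.exists_subset_card_eq
          (show ℓ + 2 ≤ (M.E ∩ lineOf s).ncard from hcon)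
        have hXE : X ⊆ M.E := hXB.trans inter_subset_left
        have hXfin : X.Finite := hfin.subset hXE
        apply hU
        refine ⟨M ↾ X, ⟨∅, ∅, empty_subset _, M.isBasis_empty_iff.mpr rfl, ?_, ?_⟩,
          hXfin, hXcard, ?_⟩
        · rw [restrict_ground_eq]
          simpa using hXE
        · intro Y hY
          rw [restrict_ground_eq] at hY
          rw [restrict_indep_iff, union_empty]
          exact ⟨fun h => h.1, fun h => ⟨h, hY⟩⟩
        · intro Y hY
          rw [restrict_ground_eq] at hY
          rw [restrict_indep_iff]
          constructor
          · rintro ⟨hYind, hYX⟩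
            have h8 := indep_ncard_le_of_subset_closure' hfin hYind hseE
              ((finite_singleton e).insert s) ((hYX.trans hXB).trans inter_subset_right)
            exact h8.trans ((Set.ncard_insert_le _ _).trans (by simp))
          · intro hY2
            exact ⟨hs Y (hY.trans hXE) (hXfin.subset hY) hY2, hY⟩
      have he2 : e ∈ M.E ∩ lineOf s :=
        ⟨he, M.mem_closure_of_mem (mem_insert_of_mem s rfl) hseE⟩
      have h9 : (A s).ncard = (M.E ∩ lineOf s).ncard - 1 :=
        Set.ncard_diff_singleton_of_mem he2
      exact ⟨hBfin.subset diff_subset, by omega⟩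
    -- covering and counting
    have hcov : M.E ⊆ insert e (⋃ s ∈ S, A s) := by
      intro f hf
      rcases eq_or_ne f e with rfl | hfe
      · exact mem_insert _ _
      obtain ⟨s, hsS, hfs⟩ := hcover f (hnotcl f hf hfe)
      exact mem_insert_of_mem _ (mem_biUnion hsS ⟨⟨hf, hfs⟩, by simpa using hfe⟩)
    have hUfin : (⋃ s ∈ S, A s).Finite :=
      Set.Finite.biUnion hSfin (fun s hs' => (hAbound s hs').1)
    have hUcard : (⋃ s ∈ S, A s).ncard ≤ ℓ * S.ncard := by
      have hF : ⋃ s ∈ S, A s = ⋃ s ∈ (hSfin.toFinset : Set α), A s := by simp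
      rw [hF]
      have h10 := ncard_biUnion_le hSfin.toFinset A ℓ
        (fun s hs' => hAbound s (hSfin.mem_toFinset.mp hs'))
      rwa [← Set.ncard_eq_toFinset_card S hSfin] at h10
    have hEcard : M.E.ncard ≤ 1 + ℓ * S.ncard := by
      calc M.E.ncard ≤ (insert e (⋃ s ∈ S, A s)).ncard :=
            Set.ncard_le_ncard hcov (hUfin.insert e)
        _ ≤ (⋃ s ∈ S, A s).ncard + 1 := Set.ncard_insert_le _ _
        _ ≤ 1 + ℓ * S.ncard := by omega
    have h1 : ℓ * (S.ncard + 1) ≤ ℓ * ℓ ^ n := Nat.mul_le_mul_left _ (by omega)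
    rw [Nat.mul_succ] at h1
    have h2 : ℓ ^ (n + 1) = ℓ * ℓ ^ n := pow_succ' ℓ n
    have h3 : ℓ * S.ncard + ℓ ≤ ℓ ^ (n + 1) := by rw [h2]; exact h1
    have hl2 : 2 ≤ ℓ := hℓ
    linarith

theorem statement2 {α : Type*} (ℓ r : ℕ) (hℓ : 2 ≤ ℓ) (M : Matroid α)
    (hfin : M.E.Finite) (hs : Simple M) (hr : rk M = r)
    (hU : ¬ HasUnifMinor M (ℓ + 2)) :
    M.E.ncard < ℓ ^ r :=
  key ℓ hℓ r M hfin hs hr.le hU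

end Paper
end

section
/- Let q be a prime power and t, n ∈ ℕ with t < n − 1. If M is the (n,q,t)-crown, then |E(M)| = (n − t)·q^t + (q^t − 1)/(q − 1). -/
open Set Matroid

namespace Paper

variable {α : Type*}

section CrownAux

open Projectivization Module

variable {F : Type*} [Field F] {V : Type*} [AddCommGroup V] [Module F V]

private lemma rep_injective :
    Function.Injective (Projectivization.rep (K := F) (V := V)) := by
  intro p q h
  conv_lhs => rw [← p.mk_rep]
  conv_rhs => rw [← q.mk_rep]
  exact (mk_eq_mk_iff F _ _ (rep_nonzero p) (rep_nonzero q)).2 ⟨1, by simp [h]⟩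

private lemma indep_iff_rep {G : Matroid (Projectivization F V)} (hG : IsPG G)
    (I : Set (Projectivization F V)) :
    G.Indep I ↔ LinearIndependent F ((↑) : (Projectivization.rep '' I) → V) := by
  rw [hG.2, independent_iff]
  exact linearIndepOn_iff_image (rep_injective.injOn)

private lemma closure_eq_span {G : Matroid (Projectivization F V)} (hG : IsPG G)
    {I : Set (Projectivization F V)} (hI : G.Indep I) :
    G.closure I = {p | p.rep ∈ Submodule.span F (Projectivization.rep '' I)} := by
  have hLI := (indep_iff_rep hG I).1 hI
  ext p
  rw [mem_setOf_eq, hI.mem_closure_iff', hG.1]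
  simp only [mem_univ, true_and]
  by_cases hpI : p ∈ I
  · exact iff_of_true (fun _ => hpI) (Submodule.subset_span (mem_image_of_mem _ hpI))
  · have hrep : p.rep ∉ Projectivization.rep '' I := by
      rintro ⟨b, hb, hbe⟩
      exact hpI ((rep_injective hbe) ▸ hb)
    rw [indep_iff_rep hG, image_insert_eq, linearIndependent_subtype_iff, linearIndepOn_id_insert hrep]
    constructor
    · intro h
      by_contra hsp
      exact hpI (h ⟨hLI, hsp⟩)
    · intro hsp h
      exact absurd hsp h.2

private lemma ncard_rep_mem_submodule [Fintype F] [Finite V] (W : Submodule F V) :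
    {p : Projectivization F V | p.rep ∈ W}.ncard * (Fintype.card F - 1) =
      Fintype.card F ^ (Module.finrank F W) - 1 := by
  classical
  set S := {p : Projectivization F V | p.rep ∈ W} with hS
  have hf : Function.Bijective (fun x : S × Fˣ => (⟨(x.2 : F) • x.1.1.rep,
      W.smul_mem _ x.1.2, smul_ne_zero (x.2.ne_zero) (rep_nonzero _)⟩ :
      {v : V // v ∈ W ∧ v ≠ 0})) := by
    constructor
    · rintro ⟨⟨p, hp⟩, c⟩ ⟨⟨p', hp'⟩, c'⟩ h
      simp only [Subtype.mk.injEq] at h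
      have hne : (c : F) • p.rep ≠ 0 := smul_ne_zero c.ne_zero (rep_nonzero _)
      have hne' : (c' : F) • p'.rep ≠ 0 := smul_ne_zero c'.ne_zero (rep_nonzero _)
      have e1 : Projectivization.mk F ((c : F) • p.rep) hne = p := by
        conv_rhs => rw [← p.mk_rep]
        exact (mk_eq_mk_iff F _ _ hne (rep_nonzero p)).2 ⟨c, rfl⟩
      have e2 : Projectivization.mk F ((c' : F) • p'.rep) hne' = p' := by
        conv_rhs => rw [← p'.mk_rep]
        exact (mk_eq_mk_iff F _ _ hne' (rep_nonzero p')).2 ⟨c', rfl⟩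
      have hpp : p = p' := by
        rw [← e1, ← e2]
        exact (mk_eq_mk_iff F _ _ hne hne').2 ⟨1, by simp [h]⟩
      subst hpp
      have hcc : (c : F) = (c' : F) := smul_left_injective F (rep_nonzero p) h
      exact Prod.ext (Subtype.ext rfl) (Units.ext hcc)
    · rintro ⟨v, hvW, hv0⟩
      obtain ⟨a, ha⟩ := exists_smul_eq_mk_rep F v hv0
      have ha' : (a : F) • v = (Projectivization.mk F v hv0).rep := ha
      have hrepW : (Projectivization.mk F v hv0).rep ∈ W := by
        rw [← ha']; exact W.smul_mem _ hvW
      refine ⟨⟨⟨Projectivization.mk F v hv0, hrepW⟩, a⁻¹⟩, ?_⟩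
      apply Subtype.ext
      show ((a⁻¹ : Fˣ) : F) • (Projectivization.mk F v hv0).rep = v
      rw [← ha', smul_smul]
      simp
  have h1 : Nat.card {v : V // v ∈ W ∧ v ≠ 0} = S.ncard * (Fintype.card F - 1) := by
    rw [← Nat.card_eq_of_bijective _ hf, Nat.card_prod,
      Nat.card_coe_set_eq, Nat.card_eq_fintype_card (α := Fˣ), Fintype.card_units]
  have h2 : Nat.card {v : V // v ∈ W ∧ v ≠ 0} =
      Fintype.card F ^ (Module.finrank F W) - 1 := by
    letI : Fintype V := Fintype.ofFinite V
    have e : {v : V // v ∈ W ∧ v ≠ 0} ≃ {w : W // ¬ (w = 0)} :=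
      { toFun := fun v => ⟨⟨v.1, v.2.1⟩, by
          simp only [Submodule.mk_eq_zero]; exact v.2.2⟩
        invFun := fun w => ⟨w.1.1, w.1.2, by
          intro h0
          exact w.2 (Subtype.ext h0)⟩
        left_inv := fun v => rfl
        right_inv := fun w => rfl }
    rw [Nat.card_congr e, Nat.card_eq_fintype_card, Fintype.card_subtype_compl,
      Fintype.card_subtype_eq, card_eq_pow_finrank (K := F) (V := W)]
  rw [← h1, h2]

private lemma span_insert_inter {x y : V} {s : Set V}
    (h : LinearIndependent F ((↑) : ↥(insert x (insert y s)) → V))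
    (hx : x ∉ insert y s) :
    Submodule.span F (insert x s) ⊓ Submodule.span F (insert y s) ≤
      Submodule.span F s := by
  intro v hv
  rw [Submodule.mem_inf] at hv
  obtain ⟨hv1, hv2⟩ := hv
  obtain ⟨a, z, hz, rfl⟩ := Submodule.mem_span_insert.1 hv1
  rcases eq_or_ne a 0 with rfl | ha
  · simpa using hz
  exfalso
  have hxsp : x ∉ Submodule.span F (insert y s) := ((linearIndepOn_id_insert hx).1 h).2
  apply hxsp
  have hzsp : z ∈ Submodule.span F (insert y s) :=
    Submodule.span_mono (subset_insert _ _) hz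
  have hax : a • x ∈ Submodule.span F (insert y s) := by
    have := Submodule.sub_mem _ hv2 hzsp
    simpa using this
  have := Submodule.smul_mem _ a⁻¹ hax
  rwa [smul_smul, inv_mul_cancel₀ ha, one_smul] at this

end CrownAux

theorem statement9 (q t n : ℕ) (F : Type*) [Field F] [Fintype F]
    (hq : Fintype.card F = q) (ht : 1 ≤ t) (htn : t < n - 1)
    (G : Matroid (Projectivization F (Fin n → F))) (hG : IsPG G)
    (B B₀ : Set (Projectivization F (Fin n → F))) (hBase : G.IsBase B)
    (hB₀ : B₀ ⊆ B) (hB₀card : B₀.Finite ∧ B₀.ncard = t) :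
    (⋃ e ∈ B \ B₀, G.closure (B₀ ∪ {e})).ncard =
      (n - t) * q ^ t + (q ^ t - 1) / (q - 1) := by
  classical
  obtain ⟨hB₀fin, hB₀n⟩ := hB₀card
  have hq2 : 2 ≤ q := by rw [← hq]; exact Fintype.one_lt_card
  have hFinP : Finite (Projectivization F (Fin n → F)) := Quotient.finite _
  have hBi : G.Indep B := hBase.indep
  have hBLI : LinearIndependent F
      ((↑) : (Projectivization.rep '' B) → (Fin n → F)) := (indep_iff_rep hG B).1 hBi
  -- the span of the representatives of a base is everything
  have hBtop : Submodule.span F (Projectivization.rep '' B) = ⊤ := by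
    by_contra hne
    obtain ⟨v, hv⟩ : ∃ v, v ∉ Submodule.span F (Projectivization.rep '' B) := by
      by_contra h
      push_neg at h
      exact hne (Submodule.eq_top_iff'.2 h)
    have hv0 : v ≠ 0 := fun h => hv (h ▸ (Submodule.span F _).zero_mem)
    set p := Projectivization.mk F v hv0 with hp
    obtain ⟨a, ha⟩ := Projectivization.exists_smul_eq_mk_rep F v hv0
    have ha' : (a : F) • v = p.rep := ha
    have hprep : p.rep ∉ Submodule.span F (Projectivization.rep '' B) := by
      intro hmem
      apply hv
      have h2 := Submodule.smul_mem _ ((a⁻¹ : Fˣ) : F) hmem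
      rw [← ha', smul_smul] at h2
      simpa using h2
    have hpB : p ∉ B := fun hpB =>
      hprep (Submodule.subset_span (mem_image_of_mem _ hpB))
    have hind : G.Indep (insert p B) := by
      rw [indep_iff_rep hG, image_insert_eq]
      refine (linearIndepOn_id_insert ?_).2 ⟨hBLI, hprep⟩
      exact fun hmem => hprep (Submodule.subset_span hmem)
    exact (hBase.insert_dep ⟨by rw [hG.1]; trivial, hpB⟩).not_indep hind
  have hBfin : B.Finite := by
    have h := hBLI.setFinite
    exact Set.Finite.of_finite_image h rep_injective.injOn
  have hBcard : B.ncard = n := by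
    letI : Fintype ↥(Projectivization.rep '' B) := (hBfin.image _).fintype
    have h := finrank_span_set_eq_card hBLI
    rw [hBtop, ← Set.ncard_eq_toFinset_card',
      Set.ncard_image_of_injective _ rep_injective, finrank_top,
      Module.finrank_fin_fun] at h
    exact h.symm
  have hBdiff : (B \ B₀).ncard = n - t := by
    rw [Set.ncard_diff hB₀ hB₀fin, hBcard, hB₀n]
  -- cardinality of the closure of a finite independent set
  have hflat : ∀ I : Set (Projectivization F (Fin n → F)), G.Indep I → I.Finite →
      (G.closure I).ncard * (q - 1) = q ^ I.ncard - 1 := by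
    intro I hI hIfin
    have hLI := (indep_iff_rep hG I).1 hI
    rw [closure_eq_span hG hI]
    letI : Fintype ↥(Projectivization.rep '' I) := (hIfin.image _).fintype
    have hrk : Module.finrank F
        (Submodule.span F (Projectivization.rep '' I)) = I.ncard := by
      rw [finrank_span_set_eq_card hLI, ← Set.ncard_eq_toFinset_card',
        Set.ncard_image_of_injective _ rep_injective]
    rw [← hq, ← hrk]
    exact ncard_rep_mem_submodule _
  set P0 := G.closure B₀ with hP0def
  have hB₀i : G.Indep B₀ := hBi.subset hB₀
  have hP0c : P0.ncard * (q - 1) = q ^ t - 1 := by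
    rw [hP0def, hflat B₀ hB₀i hB₀fin, hB₀n]
  have hIe : ∀ e ∈ B \ B₀, G.Indep (B₀ ∪ {e}) := fun e he =>
    hBi.subset (union_subset hB₀ (by simp [he.1]))
  have hFe : ∀ e ∈ B \ B₀, (G.closure (B₀ ∪ {e})).ncard * (q - 1) = q ^ (t + 1) - 1 := by
    intro e he
    rw [hflat _ (hIe e he) (hB₀fin.union (finite_singleton e)), union_singleton,
      Set.ncard_insert_of_notMem he.2 hB₀fin, hB₀n]
  have hsub : ∀ e ∈ B \ B₀, P0 ⊆ G.closure (B₀ ∪ {e}) := fun e _ =>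
    G.closure_subset_closure subset_union_left
  have hinter : ∀ e ∈ B \ B₀, ∀ f ∈ B \ B₀, e ≠ f →
      G.closure (B₀ ∪ {e}) ∩ G.closure (B₀ ∪ {f}) ⊆ P0 := by
    intro e he f hf hef
    have hIef : G.Indep (insert e (insert f B₀)) := by
      refine hBi.subset ?_
      rw [insert_subset_iff, insert_subset_iff]
      exact ⟨he.1, hf.1, hB₀⟩
    have hLIef : LinearIndependent F ((↑) : ↥(insert (Projectivization.rep e)
        (insert (Projectivization.rep f) (Projectivization.rep '' B₀))) → (Fin n → F)) := by
      have h := (indep_iff_rep hG _).1 hIef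
      rwa [image_insert_eq, image_insert_eq] at h
    have hxni : Projectivization.rep e ∉
        insert (Projectivization.rep f) (Projectivization.rep '' B₀) := by
      rintro (h | ⟨b, hb, hbe⟩)
      · exact hef (rep_injective h)
      · exact he.2 ((rep_injective hbe) ▸ hb)
    have hkey := span_insert_inter hLIef hxni
    rw [closure_eq_span hG (hIe e he), closure_eq_span hG (hIe f hf), hP0def,
      closure_eq_span hG hB₀i]
    intro p hp
    obtain ⟨hp1, hp2⟩ := hp
    apply hkey
    rw [Submodule.mem_inf]
    constructor
    · rwa [mem_setOf_eq, union_singleton, image_insert_eq] at hp1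
    · rwa [mem_setOf_eq, union_singleton, image_insert_eq] at hp2
  have hq1 : 0 < q - 1 := by omega
  have hqt1 : 1 ≤ q ^ t := Nat.one_le_pow _ _ (by omega)
  have hdcard : ∀ e ∈ B \ B₀, ((G.closure (B₀ ∪ {e})) \ P0).ncard = q ^ t := by
    intro e he
    have h1 := Set.ncard_diff_add_ncard_of_subset (hsub e he) (Set.toFinite _)
    have h4 : ((G.closure (B₀ ∪ {e}) \ P0).ncard + P0.ncard) * (q - 1) =
        q ^ (t + 1) - 1 := by rw [h1]; exact hFe e he
    have hqq : q ^ (t + 1) = q ^ t * q := pow_succ q t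
    have h5 : (G.closure (B₀ ∪ {e}) \ P0).ncard * (q - 1) = q ^ t * (q - 1) := by
      rw [add_mul, hP0c] at h4
      have h6 : q ^ t * (q - 1) = q ^ t * q - q ^ t := Nat.mul_sub_one .. ▸ by
        rw [Nat.mul_sub]
      rw [h6]
      omega
    exact Nat.eq_of_mul_eq_mul_right hq1 h5
  obtain ⟨e₀, he₀⟩ : (B \ B₀).Nonempty := by
    apply nonempty_of_ncard_ne_zero
    rw [hBdiff]
    omega
  have hUeq : (⋃ e ∈ B \ B₀, G.closure (B₀ ∪ {e})) =
      P0 ∪ ⋃ e ∈ B \ B₀, (G.closure (B₀ ∪ {e}) \ P0) := by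
    apply subset_antisymm
    · intro x hx
      simp only [mem_iUnion, exists_prop] at hx
      obtain ⟨e, he, hxe⟩ := hx
      by_cases hxP : x ∈ P0
      · exact Or.inl hxP
      · refine Or.inr ?_
        simp only [mem_iUnion, exists_prop]
        exact ⟨e, he, hxe, hxP⟩
    · rintro x (hx | hx)
      · simp only [mem_iUnion, exists_prop]
        exact ⟨e₀, he₀, hsub e₀ he₀ hx⟩
      · simp only [mem_iUnion, exists_prop] at hx ⊢
        obtain ⟨e, he, hxe⟩ := hx
        exact ⟨e, he, hxe.1⟩
  have hcount : ∀ s : Set (Projectivization F (Fin n → F)), s ⊆ B \ B₀ → s.Finite →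
      (P0 ∪ ⋃ e ∈ s, (G.closure (B₀ ∪ {e}) \ P0)).ncard =
        P0.ncard + s.ncard * q ^ t := by
    intro s hsub' hsfin
    revert hsub'
    refine Set.Finite.induction_on s hsfin (fun _ => by simp) ?_
    clear hsfin s
    intro a s ha hsfin ih hsub'
    rw [insert_subset_iff] at hsub'
    obtain ⟨haBB, hsBB⟩ := hsub'
    have hrw : (P0 ∪ ⋃ e ∈ insert a s, (G.closure (B₀ ∪ {e}) \ P0)) =
        (P0 ∪ ⋃ e ∈ s, (G.closure (B₀ ∪ {e}) \ P0)) ∪ (G.closure (B₀ ∪ {a}) \ P0) := by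
      rw [biUnion_insert]
      ext x
      simp only [mem_union]
      tauto
    have hdisj : Disjoint (P0 ∪ ⋃ e ∈ s, (G.closure (B₀ ∪ {e}) \ P0))
        (G.closure (B₀ ∪ {a}) \ P0) := by
      rw [disjoint_union_left]
      constructor
      · exact disjoint_sdiff_right
      · rw [disjoint_iff_inter_eq_empty]
        ext x
        simp only [mem_inter_iff, mem_iUnion, exists_prop, mem_empty_iff_false,
          iff_false, not_and]
        rintro ⟨e, he, hxe⟩ hxa
        have hea : e ≠ a := fun h => ha (h ▸ he)
        exact hxa.2 (hinter e (hsBB he) a haBB hea ⟨hxe.1, hxa.1⟩)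
    rw [hrw, Set.ncard_union_eq hdisj (Set.toFinite _) (Set.toFinite _),
      ih hsBB, hdcard a haBB, Set.ncard_insert_of_notMem ha hsfin]
    ring
  have hmain := hcount (B \ B₀) Subset.rfl hBfin.diff
  rw [hUeq, hmain, hBdiff]
  have hdiv : (q ^ t - 1) / (q - 1) = P0.ncard :=
    Nat.div_eq_of_eq_mul_left hq1 hP0c.symm
  rw [hdiv]
  ring

end Paper
end

section
/- If q is a prime power, then the affine geometry AG(q − 1, q) has no M(K_{q+1})-minor. -/
open Set Matroid

namespace Paper

variable {α : Type*}

section Aux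

open Projectivization

variable {F : Type*} [Field F] {W : Type*} [AddCommGroup W] [Module F W]

lemma inj2 {x1 x2 : α} (h : x1 ≠ x2) : Function.Injective ![x1, x2] := by
  intro a b hab
  fin_cases a <;> fin_cases b <;> simp_all

lemma inj3 {x1 x2 x3 : α} (h12 : x1 ≠ x2) (h13 : x1 ≠ x3) (h23 : x2 ≠ x3) :
    Function.Injective ![x1, x2, x3] := by
  intro a b hab
  fin_cases a <;> fin_cases b <;> simp_all

lemma range2 (x1 x2 : α) : Set.range ![x1, x2] = {x1, x2} := by
  ext z
  constructor
  · rintro ⟨i, rfl⟩; fin_cases i <;> simp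
  · rintro (rfl | rfl)
    exacts [⟨0, rfl⟩, ⟨1, rfl⟩]

lemma range3 (x1 x2 x3 : α) : Set.range ![x1, x2, x3] = {x1, x2, x3} := by
  ext z
  constructor
  · rintro ⟨i, rfl⟩; fin_cases i <;> simp
  · rintro (rfl | rfl | rfl)
    exacts [⟨0, rfl⟩, ⟨1, rfl⟩, ⟨2, rfl⟩]

lemma la1 {v1 v2 v3 : W}
    (h12 : ∀ s t : F, s • v1 + t • v2 = 0 → s = 0 ∧ t = 0)
    (h13 : ∀ s t : F, s • v1 + t • v3 = 0 → s = 0 ∧ t = 0)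
    (h23 : ∀ s t : F, s • v2 + t • v3 = 0 → s = 0 ∧ t = 0)
    (hdep : ∃ a b c : F, a • v1 + b • v2 + c • v3 = 0 ∧ ¬(a = 0 ∧ b = 0 ∧ c = 0)) :
    ∃ s t : F, v3 = s • v1 + t • v2 ∧ s ≠ 0 ∧ t ≠ 0 := by
  obtain ⟨a, b, c, hsum, hne⟩ := hdep
  have hc : c ≠ 0 := by
    rintro rfl
    obtain ⟨ha, hb⟩ := h12 a b (by simpa using hsum)
    exact hne ⟨ha, hb, rfl⟩
  have ha : a ≠ 0 := by
    rintro rfl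
    obtain ⟨hb, hc'⟩ := h23 b c (by simpa using hsum)
    exact hc hc'
  have hb : b ≠ 0 := by
    rintro rfl
    obtain ⟨ha', hc'⟩ := h13 a c (by simpa [add_comm] using hsum)
    exact hc hc'
  refine ⟨-(c⁻¹ * a), -(c⁻¹ * b), ?_, by simp [hc, ha], by simp [hc, hb]⟩
  have h0 : c • v3 = -(a • v1) - (b • v2) := by
    linear_combination (norm := module) hsum
  calc v3 = c⁻¹ • (c • v3) := by rw [smul_smul, inv_mul_cancel₀ hc, one_smul]
  _ = _ := by rw [h0]; module

lemma coord3 {ι : Type*} [Fintype ι] {u : ι → W} (hu : LinearIndependent F u)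
    {i j k : ι} (hij : i ≠ j) (hik : i ≠ k) (hjk : j ≠ k) (p q r : F)
    (h : p • u i + q • u j + r • u k = 0) : p = 0 ∧ q = 0 ∧ r = 0 := by
  have h2 := (hu.comp ![i, j, k] (inj3 hij hik hjk))
  rw [Fintype.linearIndependent_iff] at h2
  have h3 := h2 ![p, q, r] (by
    simp only [Fin.sum_univ_three]
    simpa using h)
  exact ⟨h3 0, h3 1, h3 2⟩

lemma li_smul_iff {ι : Type*} (c : ι → F) (hc : ∀ i, c i ≠ 0) (g : ι → W) :
    LinearIndependent F (fun i => c i • g i) ↔ LinearIndependent F g := by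
  constructor
  · intro h
    have h2 := h.units_smul (fun i => (Units.mk0 (c i) (hc i))⁻¹)
    have h3 : ((fun i => (Units.mk0 (c i) (hc i))⁻¹) • fun i => c i • g i) = g := by
      funext i
      simp [Units.smul_def, smul_smul, inv_mul_cancel₀ (hc i)]
    rwa [h3] at h2
  · intro h
    have h2 := h.units_smul (fun i => Units.mk0 (c i) (hc i))
    have h3 : ((fun i => Units.mk0 (c i) (hc i)) • g) = fun i => c i • g i := by
      funext i; simp [Units.smul_def]
    rwa [h3] at h2

/-- The normalized affine representative of a projective point. -/
noncomputable def vv (φ : W →ₗ[F] F) (z : Projectivization F W) : W := (φ z.rep)⁻¹ • z.rep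

lemma phi_vv (φ : W →ₗ[F] F) (z : Projectivization F W) (hz : φ z.rep ≠ 0) :
    φ (vv φ z) = 1 := by
  simp [vv, map_smul, smul_eq_mul, inv_mul_cancel₀ hz]

lemma key_s11 {ι : Type*} (φ : W →ₗ[F] F) {G : Matroid (Projectivization F W)} (hG : IsPG G)
    (y : ι → Projectivization F W) (hy : Function.Injective y)
    (hr : ∀ i, φ (y i).rep ≠ 0) :
    (G ↾ {x | φ x.rep ≠ 0}).Indep (Set.range y) ↔
      LinearIndependent F (fun i => vv φ (y i)) := by
  have hsub : Set.range y ⊆ {x | φ x.rep ≠ 0} := by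
    rintro - ⟨i, rfl⟩; exact hr i
  rw [Matroid.restrict_indep_iff, and_iff_left hsub, hG.2, independent_iff]
  rw [← linearIndependent_equiv (Equiv.ofInjective y hy)
    (f := Projectivization.rep ∘ fun x : Set.range y => x.1)]
  have h1 : (Projectivization.rep ∘ fun x : Set.range y => x.1) ∘ (Equiv.ofInjective y hy)
      = fun i => (y i).rep := rfl
  rw [h1]
  rw [show (fun i => vv φ (y i)) = fun i => ((φ (y i).rep)⁻¹) • (y i).rep from rfl]
  rw [li_smul_iff (fun i => (φ (y i).rep)⁻¹) (fun i => inv_ne_zero (hr i))]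

lemma card_le [Finite F] {q : ℕ} {G : Matroid (Projectivization F (Fin q → F))} (hG : IsPG G)
    {X : Set (Projectivization F (Fin q → F))} (hX : G.Indep X) : X.ncard ≤ q := by
  haveI : Finite (Projectivization F (Fin q → F)) := by
    unfold Projectivization; exact Quotient.finite _
  haveI := Fintype.ofFinite X
  have h1 : Projectivization.Independent (fun x : X => x.1) := (hG.2 X).1 hX
  rw [independent_iff] at h1
  have h2 : Fintype.card X ≤ Module.finrank F (Fin q → F) :=
    h1.fintype_card_le_finrank
  rw [Module.finrank_fin_fun] at h2
  rwa [Set.ncard_eq_toFinset_card', Set.toFinset_card]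

lemma triangle_circuit {V : Type*} (p q r : V) (hpq : p ≠ q) (hqr : q ≠ r) (hpr : p ≠ r) :
    GraphicCircuit (SimpleGraph.completeGraph V) {s(p,q), s(q,r), s(p,r)} := by
  refine ⟨p, SimpleGraph.Walk.cons (by exact hpq)
    (SimpleGraph.Walk.cons (by exact hqr)
      (SimpleGraph.Walk.cons (by exact hpr.symm) SimpleGraph.Walk.nil)), ?_, ?_⟩
  · constructor
    · constructor
      · constructor
        simp [SimpleGraph.Walk.edges, Sym2.eq_iff]
        tauto
      · simp
    · simp [SimpleGraph.Walk.support]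
      exact ⟨⟨hqr, hpq.symm⟩, hpr.symm⟩
  · ext e
    simp [SimpleGraph.Walk.edges, Sym2.eq_swap (a := r) (b := p)]

lemma no_cycle_in_star {V : Type*} (v0 : V) {v : V} {G : SimpleGraph V}
    (w : G.Walk v v) (hw : w.IsCycle) (h : ∀ e ∈ w.edges, v0 ∈ e) : False := by
  have h3 := hw.three_le_length
  cases w with
  | nil => simp at h3
  | cons h1 p =>
    rename_i b
    cases p with
    | nil => simp at h3
    | cons h2 p =>
      rename_i c
      cases p with
      | nil => simp at h3
      | cons h3' p =>
        rename_i d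
        have hnd := hw.support_nodup
        simp only [SimpleGraph.Walk.support_cons, List.tail_cons, List.nodup_cons] at hnd
        have he1 : v0 ∈ s(v, b) := h _ (by simp)
        have he2 : v0 ∈ s(b, c) := h _ (by simp)
        have he3 : v0 ∈ s(c, d) := h _ (by simp)
        rw [Sym2.mem_iff] at he1 he2 he3
        by_cases hb : b = v0
        · have hcc : c ≠ v0 := fun hc => h2.ne ((hb.trans hc.symm))
          have hd : d = v0 := by
            rcases he3 with h' | h'
            · exact absurd h'.symm hcc
            · exact h'.symm
          have hdmem : d ∈ p.support := SimpleGraph.Walk.start_mem_support p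
          exact hnd.1 (List.mem_cons_of_mem _ (by rw [hb, ← hd]; exact hdmem))
        · have hv : v = v0 := by
            rcases he1 with h' | h'
            · exact h'.symm
            · exact absurd h'.symm hb
          have hcc : c = v0 := by
            rcases he2 with h' | h'
            · exact absurd h'.symm hb
            · exact h'.symm
          have hvmem : v ∈ p.support := SimpleGraph.Walk.end_mem_support p
          exact hnd.2.1 (by rw [hcc, ← hv]; exact hvmem)

lemma exists_circuit_aux [Finite α] (M : Matroid α) :
    ∀ (n : ℕ) (X : Set α), X.ncard = n → M.Dep X → ∃ C ⊆ X, IsCircuit M C := by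
  intro n
  induction n using Nat.strong_induction_on with
  | _ n ih =>
    intro X hn hX
    by_cases h : ∀ D ⊂ X, ¬ M.Dep D
    · exact ⟨X, Subset.rfl, hX, h⟩
    · push_neg at h
      obtain ⟨D, hDX, hD⟩ := h
      have hlt : D.ncard < n := hn ▸ Set.ncard_lt_ncard hDX (Set.toFinite X)
      obtain ⟨C, hCD, hC⟩ := ih _ hlt D rfl hD
      exact ⟨C, hCD.trans hDX.subset, hC⟩

lemma exists_circuit [Finite α] {M : Matroid α} {X : Set α} (hX : M.Dep X) :
    ∃ C ⊆ X, IsCircuit M C :=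
  exists_circuit_aux M X.ncard X rfl hX

end Aux

theorem statement11 (q : ℕ) (F : Type*) [Field F] [Fintype F]
    (hq : Fintype.card F = q)
    (G : Matroid (Projectivization F (Fin q → F))) (hG : IsPG G)
    (φ : (Fin q → F) →ₗ[F] F) (hφ : φ ≠ 0) :
    ¬ HasCliqueMinor (G ↾ {x | φ x.rep ≠ 0}) (q + 1) := by
  classical
  intro hmin
  haveI : Finite (Projectivization F (Fin q → F)) := by
    unfold Projectivization; exact Quotient.finite _
  obtain ⟨N, ⟨C, I, hCE, hIC, hNE, hNI⟩, f, hfinj, hfim, hfcirc⟩ := hmin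
  have hq1 : 1 < q := by
    have h := Fintype.one_lt_card (α := F)
    rwa [hq] at h
  have hq0 : 0 < q := by omega
  set i0 : Fin q := ⟨0, hq0⟩ with hi0
  have hadj : ∀ {a b : Fin (q+1)}, a ≠ b →
      s(a, b) ∈ (SimpleGraph.completeGraph (Fin (q+1))).edgeSet :=
    fun h => (SimpleGraph.mem_edgeSet _).mpr h
  -- choose representing elements for the edges
  obtain ⟨z₀, hz₀, -⟩ : ∃ z ∈ N.E, f z = s((0 : Fin (q+1)), i0.succ) := by
    have h : s((0 : Fin (q+1)), i0.succ) ∈ f '' N.E := by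
      rw [hfim]; exact hadj (Fin.succ_ne_zero i0).symm
    obtain ⟨z, hz, hfz⟩ := h
    exact ⟨z, hz, hfz⟩
  have hx0 : ∀ e : Sym2 (Fin (q+1)), ∃ z,
      e ∈ (SimpleGraph.completeGraph (Fin (q+1))).edgeSet → z ∈ N.E ∧ f z = e := by
    intro e
    by_cases he : e ∈ (SimpleGraph.completeGraph (Fin (q+1))).edgeSet
    · have h : e ∈ f '' N.E := by rw [hfim]; exact he
      obtain ⟨z, hz, hfz⟩ := h
      exact ⟨z, fun _ => ⟨hz, hfz⟩⟩
    · exact ⟨z₀, fun h => absurd h he⟩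
  choose x hx using hx0
  have xne : ∀ e1 e2 : Sym2 (Fin (q+1)), e1 ∈ (SimpleGraph.completeGraph (Fin (q+1))).edgeSet →
      e2 ∈ (SimpleGraph.completeGraph (Fin (q+1))).edgeSet → e1 ≠ e2 → x e1 ≠ x e2 := by
    intro e1 e2 he1 he2 hne h
    exact hne (by rw [← (hx _ he1).2, ← (hx _ he2).2, h])
  -- ground set facts
  have hNEM : ∀ z ∈ N.E, φ z.rep ≠ 0 := fun z hz => (hNE hz).1
  -- the star family
  have hedge0 : ∀ j : Fin q, s((0 : Fin (q+1)), j.succ) ∈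
      (SimpleGraph.completeGraph (Fin (q+1))).edgeSet := fun j => hadj (Fin.succ_ne_zero j).symm
  have hymem : ∀ j : Fin q, x s((0 : Fin (q+1)), j.succ) ∈ N.E :=
    fun j => (hx _ (hedge0 j)).1
  have hyf : ∀ j : Fin q, f (x s((0 : Fin (q+1)), j.succ)) = s(0, j.succ) :=
    fun j => (hx _ (hedge0 j)).2
  have hyinj : Function.Injective (fun j : Fin q => x s((0 : Fin (q+1)), j.succ)) := by
    intro a b hab
    have h : s((0 : Fin (q+1)), a.succ) = s(0, b.succ) := by
      rw [← hyf a, ← hyf b]; exact congrArg f hab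
    rw [Sym2.eq_iff] at h
    rcases h with ⟨-, h2⟩ | ⟨h1, -⟩
    · exact Fin.succ_injective _ h2
    · exact absurd h1.symm (Fin.succ_ne_zero b)
  have hyEsub : Set.range (fun j : Fin q => x s((0 : Fin (q+1)), j.succ)) ⊆ N.E := by
    rintro - ⟨j, rfl⟩; exact hymem j
  -- the star is independent in N
  have hSind : N.Indep (Set.range (fun j : Fin q => x s((0 : Fin (q+1)), j.succ))) := by
    rw [← Matroid.not_dep_iff hyEsub]
    intro hdep
    obtain ⟨C₀, hC₀sub, hC₀⟩ := exists_circuit hdep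
    obtain ⟨v, w, hw, hEq⟩ := (hfcirc C₀ (hC₀sub.trans hyEsub)).1 hC₀
    refine no_cycle_in_star (0 : Fin (q+1)) w hw ?_
    intro e he
    have h : e ∈ f '' C₀ := by rw [hEq]; exact he
    obtain ⟨z, hz, rfl⟩ := h
    obtain ⟨j, rfl⟩ := hC₀sub hz
    rw [hyf j]
    simp
  -- I must be empty
  have hMSI : (G ↾ {x | φ x.rep ≠ 0}).Indep
      (Set.range (fun j : Fin q => x s((0 : Fin (q+1)), j.succ)) ∪ I) :=
    (hNI _ hyEsub).1 hSind
  have hGI : G.Indep (Set.range (fun j : Fin q => x s((0 : Fin (q+1)), j.succ)) ∪ I) :=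
    (Matroid.restrict_indep_iff.1 hMSI).1
  have hcard := card_le hG hGI
  have hdisj : Disjoint (Set.range (fun j : Fin q => x s((0 : Fin (q+1)), j.succ))) I := by
    refine Set.disjoint_left.2 fun z hz hzI => ?_
    exact (hNE (hyEsub hz)).2 (hIC.subset hzI)
  have hrange_card : (Set.range (fun j : Fin q => x s((0 : Fin (q+1)), j.succ))).ncard = q := by
    rw [← Set.image_univ, Set.ncard_image_of_injective _ hyinj, Set.ncard_univ]
    simp
  have hI0 : I = ∅ := by
    rw [Set.ncard_union_eq hdisj (Set.toFinite _) (Set.toFinite _), hrange_card] at hcard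
    have h : I.ncard = 0 := by omega
    rwa [Set.ncard_eq_zero (Set.toFinite _)] at h
  have hNM : ∀ X ⊆ N.E, (N.Indep X ↔ (G ↾ {x | φ x.rep ≠ 0}).Indep X) := by
    intro X hX
    have h := hNI X hX
    rwa [hI0, Set.union_empty] at h
  -- basis of normalized vectors
  have hyrep : ∀ j : Fin q, φ (x s((0 : Fin (q+1)), j.succ)).rep ≠ 0 :=
    fun j => hNEM _ (hymem j)
  have hu : LinearIndependent F (fun j : Fin q => vv φ (x s((0 : Fin (q+1)), j.succ))) :=
    (key_s11 φ hG _ hyinj hyrep).1 ((hNM _ hyEsub).1 hSind)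
  -- matroid-to-linear-algebra dictionary
  have pair_ind : ∀ z1 z2, z1 ∈ N.E → z2 ∈ N.E → z1 ≠ z2 → N.Indep {z1, z2} →
      ∀ s t : F, s • vv φ z1 + t • vv φ z2 = 0 → s = 0 ∧ t = 0 := by
    intro z1 z2 h1 h2 hne hind s t hsum
    have hsub : ({z1, z2} : Set _) ⊆ N.E := by
      intro w hw
      simp only [Set.mem_insert_iff, Set.mem_singleton_iff] at hw
      rcases hw with rfl | rfl <;> assumption
    have hMind : (G ↾ {x | φ x.rep ≠ 0}).Indep (Set.range ![z1, z2]) := by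
      rw [range2]; exact (hNM _ hsub).1 hind
    have hli := (key_s11 φ hG ![z1, z2] (inj2 hne) (by
      intro i; fin_cases i
      · exact hNEM _ h1
      · exact hNEM _ h2)).1 hMind
    rw [Fintype.linearIndependent_iff] at hli
    have h3 := hli ![s, t] (by
      simp only [Fin.sum_univ_two]
      simpa using hsum)
    exact ⟨h3 0, h3 1⟩
  have triple_dep : ∀ z1 z2 z3, z1 ∈ N.E → z2 ∈ N.E → z3 ∈ N.E →
      z1 ≠ z2 → z1 ≠ z3 → z2 ≠ z3 → ¬ N.Indep {z1, z2, z3} →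
      ∃ a b c : F, a • vv φ z1 + b • vv φ z2 + c • vv φ z3 = 0 ∧
        ¬(a = 0 ∧ b = 0 ∧ c = 0) := by
    intro z1 z2 z3 h1 h2 h3 h12 h13 h23 hdep
    have hsub : ({z1, z2, z3} : Set _) ⊆ N.E := by
      intro w hw
      simp only [Set.mem_insert_iff, Set.mem_singleton_iff] at hw
      rcases hw with rfl | rfl | rfl <;> assumption
    have hMdep : ¬ (G ↾ {x | φ x.rep ≠ 0}).Indep (Set.range ![z1, z2, z3]) := by
      rw [range3]
      exact fun h => hdep ((hNM _ hsub).2 h)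
    rw [key_s11 φ hG ![z1, z2, z3] (inj3 h12 h13 h23) (by
      intro i; fin_cases i
      · exact hNEM _ h1
      · exact hNEM _ h2
      · exact hNEM _ h3)] at hMdep
    rw [Fintype.linearIndependent_iff] at hMdep
    push_neg at hMdep
    obtain ⟨g, hg0, i, hgi⟩ := hMdep
    refine ⟨g 0, g 1, g 2, by simpa [Fin.sum_univ_three] using hg0, ?_⟩
    rintro ⟨ha, hb, hc⟩
    fin_cases i
    · exact hgi ha
    · exact hgi hb
    · exact hgi hc
  -- triangles are circuits of N
  have htri : ∀ p1 p2 p3 : Fin (q+1), p1 ≠ p2 → p2 ≠ p3 → p1 ≠ p3 →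
      IsCircuit N {x s(p1, p2), x s(p2, p3), x s(p1, p3)} := by
    intro p1 p2 p3 h12 h23 h13
    have e1 := hadj h12
    have e2 := hadj h23
    have e3 := hadj h13
    have hsub : ({x s(p1, p2), x s(p2, p3), x s(p1, p3)} : Set _) ⊆ N.E := by
      intro w hw
      simp only [Set.mem_insert_iff, Set.mem_singleton_iff] at hw
      rcases hw with rfl | rfl | rfl
      exacts [(hx _ e1).1, (hx _ e2).1, (hx _ e3).1]
    rw [hfcirc _ hsub]
    have himg : f '' {x s(p1, p2), x s(p2, p3), x s(p1, p3)} =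
        {s(p1, p2), s(p2, p3), s(p1, p3)} := by
      rw [Set.image_insert_eq, Set.image_insert_eq, Set.image_singleton,
        (hx _ e1).2, (hx _ e2).2, (hx _ e3).2]
    rw [himg]
    exact triangle_circuit p1 p2 p3 h12 h23 h13
  -- pairs inside a circuit triangle are independent
  have circuit_pairs : ∀ z1 z2 z3 : Projectivization F (Fin q → F), z1 ∈ N.E → z2 ∈ N.E →
      z1 ≠ z2 → z1 ≠ z3 → z2 ≠ z3 → IsCircuit N {z1, z2, z3} → N.Indep {z1, z2} := by
    intro z1 z2 z3 h1 h2 h12 h13 h23 hC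
    have hsub2 : ({z1, z2} : Set _) ⊆ N.E := by
      intro w hw
      simp only [Set.mem_insert_iff, Set.mem_singleton_iff] at hw
      rcases hw with rfl | rfl <;> assumption
    rw [← Matroid.not_dep_iff hsub2]
    refine hC.2 _ ⟨?_, ?_⟩
    · intro w hw
      simp only [Set.mem_insert_iff, Set.mem_singleton_iff] at hw ⊢
      rcases hw with h | h
      · exact Or.inl h
      · exact Or.inr (Or.inl h)
    · intro hsup
      have h : z3 ∈ ({z1, z2} : Set _) := hsup (by simp)
      simp only [Set.mem_insert_iff, Set.mem_singleton_iff] at h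
      rcases h with h | h
      · exact h13 h.symm
      · exact h23 h.symm
  -- sym2 inequality helpers
  have hsymne : ∀ a b c d : Fin (q+1), s(a, b) = s(c, d) →
      (a = c ∧ b = d) ∨ (a = d ∧ b = c) := by
    intro a b c d h
    rwa [Sym2.eq_iff] at h
  -- from a circuit triangle, the middle element is a proper affine combination
  have key3 : ∀ z1 z2 z3, z1 ∈ N.E → z2 ∈ N.E → z3 ∈ N.E →
      z1 ≠ z2 → z1 ≠ z3 → z2 ≠ z3 → IsCircuit N {z1, z2, z3} →
      ∃ a b : F, vv φ z2 = a • vv φ z1 + b • vv φ z3 ∧ a ≠ 0 ∧ b ≠ 0 ∧ a + b = 1 := by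
    intro z1 z2 z3 h1 h2 h3 h12 h13 h23 hC
    have hp12 : N.Indep {z1, z2} := circuit_pairs _ _ _ h1 h2 h12 h13 h23 hC
    have hC' : IsCircuit N {z1, z3, z2} := by
      have he : ({z1, z3, z2} : Set _) = {z1, z2, z3} := by
        rw [Set.pair_comm z3 z2]
      rwa [he]
    have hC'' : IsCircuit N {z2, z3, z1} := by
      have he : ({z2, z3, z1} : Set _) = {z1, z2, z3} := by
        rw [Set.pair_comm z3 z1, Set.insert_comm z2 z1]
      rwa [he]
    have hp13 : N.Indep {z1, z3} := circuit_pairs _ _ _ h1 h3 h13 h12 (Ne.symm h23) hC'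
    have hp23 : N.Indep {z2, z3} :=
      circuit_pairs _ _ _ h2 h3 h23 (Ne.symm h12) (Ne.symm h13) hC''
    have hp32 : N.Indep {z3, z2} := by
      rwa [Set.pair_comm z3 z2]
    obtain ⟨a, b, c, hsum, hne⟩ :=
      triple_dep _ _ _ h1 h2 h3 h12 h13 h23 hC.1.not_indep
    obtain ⟨s, t, hveq, hs, ht⟩ := la1
      (pair_ind _ _ h1 h3 h13 hp13)
      (pair_ind _ _ h1 h2 h12 hp12)
      (pair_ind _ _ h3 h2 (Ne.symm h23) hp32)
      ⟨a, c, b, by linear_combination (norm := module) hsum,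
        fun ⟨ha', hc', hb'⟩ => hne ⟨ha', hb', hc'⟩⟩
    refine ⟨s, t, hveq, hs, ht, ?_⟩
    have hφ3 := phi_vv φ _ (hNEM _ h2)
    rw [hveq, map_add, map_smul, map_smul, phi_vv φ _ (hNEM _ h1),
      phi_vv φ _ (hNEM _ h3)] at hφ3
    simpa using hφ3
  -- coefficients for each edge between nonzero vertices
  have hedge : ∀ i j : Fin q, i ≠ j →
      ∃ a b : F, vv φ (x s(i.succ, j.succ)) =
          a • vv φ (x s((0 : Fin (q+1)), i.succ)) + b • vv φ (x s((0 : Fin (q+1)), j.succ)) ∧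
        a ≠ 0 ∧ b ≠ 0 ∧ a + b = 1 := by
    intro i j hij
    have hsij : i.succ ≠ j.succ := fun h => hij (Fin.succ_injective _ h)
    have eij : s(i.succ, j.succ) ∈ (SimpleGraph.completeGraph (Fin (q+1))).edgeSet := hadj hsij
    have hT := htri (0 : Fin (q+1)) i.succ j.succ (Fin.succ_ne_zero i).symm hsij
      (Fin.succ_ne_zero j).symm
    have hz1 := hymem i
    have hz3 := hymem j
    have hz2 : x s(i.succ, j.succ) ∈ N.E := (hx _ eij).1
    have hne13 : x s((0 : Fin (q+1)), i.succ) ≠ x s((0 : Fin (q+1)), j.succ) :=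
      fun h => hij (hyinj h)
    have hne12 : x s((0 : Fin (q+1)), i.succ) ≠ x s(i.succ, j.succ) := by
      refine xne _ _ (hedge0 i) eij fun h => ?_
      rcases hsymne _ _ _ _ h with ⟨h1, -⟩ | ⟨h1, -⟩
      · exact (Fin.succ_ne_zero i) h1.symm
      · exact (Fin.succ_ne_zero j) h1.symm
    have hne23 : x s(i.succ, j.succ) ≠ x s((0 : Fin (q+1)), j.succ) := by
      refine (Ne.symm (xne _ _ (hedge0 j) eij fun h => ?_))
      rcases hsymne _ _ _ _ h with ⟨h1, -⟩ | ⟨h1, -⟩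
      · exact (Fin.succ_ne_zero i) h1.symm
      · exact (Fin.succ_ne_zero j) h1.symm
    exact key3 _ _ _ hz1 hz2 hz3 hne12 hne13 hne23 hT
  choose! A B hVe hA0 hB0 hAB1 using hedge
  -- triangle relation between coefficients
  have hrel : ∀ i j k : Fin q, i ≠ j → i ≠ k → j ≠ k →
      A i j * A j k * B i k + B i j * B j k * A i k = 0 := by
    intro i j k hij hik hjk
    have hsij : i.succ ≠ j.succ := fun h => hij (Fin.succ_injective _ h)
    have hsik : i.succ ≠ k.succ := fun h => hik (Fin.succ_injective _ h)
    have hsjk : j.succ ≠ k.succ := fun h => hjk (Fin.succ_injective _ h)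
    have eij := hadj hsij
    have ejk := hadj hsjk
    have eik := hadj hsik
    have hT := htri i.succ j.succ k.succ hsij hsjk hsik
    have hz1 : x s(i.succ, j.succ) ∈ N.E := (hx _ eij).1
    have hz2 : x s(j.succ, k.succ) ∈ N.E := (hx _ ejk).1
    have hz3 : x s(i.succ, k.succ) ∈ N.E := (hx _ eik).1
    have hne12 : x s(i.succ, j.succ) ≠ x s(j.succ, k.succ) := by
      refine xne _ _ eij ejk fun h => ?_
      rcases hsymne _ _ _ _ h with ⟨h1, h2⟩ | ⟨h1, -⟩
      · exact hsij h1
      · exact hsik h1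
    have hne13 : x s(i.succ, j.succ) ≠ x s(i.succ, k.succ) := by
      refine xne _ _ eij eik fun h => ?_
      rcases hsymne _ _ _ _ h with ⟨-, h2⟩ | ⟨h1, -⟩
      · exact hsjk h2
      · exact hsik h1
    have hne23 : x s(j.succ, k.succ) ≠ x s(i.succ, k.succ) := by
      refine xne _ _ ejk eik fun h => ?_
      rcases hsymne _ _ _ _ h with ⟨h1, -⟩ | ⟨h1, -⟩
      · exact hsij h1.symm
      · exact hsjk h1
    have hdep := triple_dep _ _ _ hz1 hz2 hz3 hne12 hne13 hne23 hT.1.not_indep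
    obtain ⟨a, b, c, hsum, hne⟩ := hdep
    rw [hVe i j hij, hVe j k hjk, hVe i k hik] at hsum
    have hco : (a * A i j + c * A i k) • vv φ (x s((0 : Fin (q+1)), i.succ)) +
        (a * B i j + b * A j k) • vv φ (x s((0 : Fin (q+1)), j.succ)) +
        (b * B j k + c * B i k) • vv φ (x s((0 : Fin (q+1)), k.succ)) = 0 := by
      linear_combination (norm := module) hsum
    obtain ⟨hp, hqq, hr⟩ := coord3 hu hij hik hjk _ _ _ hco
    have ha : a ≠ 0 := by
      rintro rfl
      simp only [zero_mul, zero_add] at hp hqq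
      have hc0 : c = 0 := by
        rcases mul_eq_zero.1 hp with h | h
        · exact h
        · exact absurd h (hA0 i k hik)
      have hb0 : b = 0 := by
        rcases mul_eq_zero.1 hqq with h | h
        · exact h
        · exact absurd h (hA0 j k hjk)
      exact hne ⟨rfl, hb0, hc0⟩
    have hb : b ≠ 0 := by
      rintro rfl
      simp only [zero_mul, add_zero, zero_add] at hqq hr
      have ha0 : a = 0 := by
        rcases mul_eq_zero.1 hqq with h | h
        · exact h
        · exact absurd h (hB0 i j hij)
      exact ha ha0
    have hc : c ≠ 0 := by
      rintro rfl
      simp only [zero_mul, add_zero] at hp hr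
      have ha0 : a = 0 := by
        rcases mul_eq_zero.1 hp with h | h
        · exact h
        · exact absurd h (hA0 i j hij)
      exact ha ha0
    have habc : a * (b * c) ≠ 0 := mul_ne_zero ha (mul_ne_zero hb hc)
    apply mul_left_cancel₀ habc
    rw [mul_zero]
    linear_combination (b * c * (A j k) * (B i k)) * hp +
      (b * c * (A i k) * (B j k)) * hqq - (b * c * (A j k) * (A i k)) * hr
  -- ratios are never -1
  have hrne1 : ∀ i j : Fin q, i ≠ j → A i j * (B i j)⁻¹ ≠ -1 := by
    intro i j hij h
    have hb := hB0 i j hij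
    have hA : A i j = -B i j := by
      have h2 := congrArg (· * B i j) h
      change A i j * (B i j)⁻¹ * B i j = -1 * B i j at h2
      rwa [mul_assoc, inv_mul_cancel₀ hb, mul_one, neg_mul, one_mul] at h2
    have h1 := hAB1 i j hij
    rw [hA] at h1
    simp at h1
  -- the vertex labels
  have hd0 : ∀ i : Fin q,
      (if i = i0 then (1 : F) else -(A i0 i * (B i0 i)⁻¹)⁻¹) ≠ 0 := by
    intro i
    by_cases h : i = i0
    · simp [h]
    · simp only [h, if_false]
      refine neg_ne_zero.2 (inv_ne_zero (mul_ne_zero (hA0 i0 i (Ne.symm h))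
        (inv_ne_zero (hB0 i0 i (Ne.symm h)))))
  have hdinj : Function.Injective
      (fun i : Fin q => if i = i0 then (1 : F) else -(A i0 i * (B i0 i)⁻¹)⁻¹) := by
    intro i j hdij
    simp only at hdij
    by_cases hi : i = i0 <;> by_cases hj : j = i0
    · rw [hi, hj]
    · exfalso
      rw [if_pos hi, if_neg hj] at hdij
      have hinv : (A i0 j * (B i0 j)⁻¹)⁻¹ = -1 := by linear_combination hdij
      have ht : A i0 j * (B i0 j)⁻¹ = -1 := by
        rw [← inv_inv (A i0 j * (B i0 j)⁻¹), hinv]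
        norm_num
      exact hrne1 i0 j (Ne.symm hj) ht
    · exfalso
      rw [if_neg hi, if_pos hj] at hdij
      have hinv : (A i0 i * (B i0 i)⁻¹)⁻¹ = -1 := by linear_combination -hdij
      have ht : A i0 i * (B i0 i)⁻¹ = -1 := by
        rw [← inv_inv (A i0 i * (B i0 i)⁻¹), hinv]
        norm_num
      exact hrne1 i0 i (Ne.symm hi) ht
    · by_cases hij : i = j
      · exact hij
      exfalso
      rw [if_neg hi, if_neg hj] at hdij
      have hinveq : A i0 i * (B i0 i)⁻¹ = A i0 j * (B i0 j)⁻¹ :=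
        inv_injective (neg_injective hdij)
      have hcross : A i0 i * B i0 j = A i0 j * B i0 i := by
        have hbi := hB0 i0 i (Ne.symm hi)
        have hbj := hB0 i0 j (Ne.symm hj)
        rw [← div_eq_mul_inv, ← div_eq_mul_inv, div_eq_div_iff hbi hbj] at hinveq
        exact hinveq
      have hrel' := hrel i0 i j (Ne.symm hi) (Ne.symm hj) hij
      have hab := hAB1 i j hij
      have hzero : A i0 j * B i0 i = 0 := by
        linear_combination hrel' - (A i j) * hcross - (A i0 j * B i0 i) * hab
      exact mul_ne_zero (hA0 i0 j (Ne.symm hj)) (hB0 i0 i (Ne.symm hi)) hzero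
  -- pigeonhole
  have hcinj : Function.Injective
      (Fin.cases (0 : F)
        (fun i : Fin q => if i = i0 then (1 : F) else -(A i0 i * (B i0 i)⁻¹)⁻¹) :
        Fin (q+1) → F) := by
    intro v w h
    induction v using Fin.cases with
    | zero =>
      induction w using Fin.cases with
      | zero => rfl
      | succ w' =>
        exfalso
        apply hd0 w'
        simpa using h.symm
    | succ v' =>
      induction w using Fin.cases with
      | zero =>
        exfalso
        apply hd0 v'
        simpa using h
      | succ w' =>
        have h2 : v' = w' := hdinj (by simpa using h)
        rw [h2]
  have hfin := Fintype.card_le_of_injective _ hcinj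
  rw [hq, Fintype.card_fin] at hfin
  omega

end Paper
end

section
/- Let n ∈ ℕ and T = (e_X : X ∈ S(n)) be an n-tower in a matroid M. Then the restriction M|E(T) has rank n, and the set of joints {e_1, ..., e_n} is a basis of M|E(T). -/
open Set Matroid

namespace Paper

variable {α : Type*}

variable {M : Matroid α} {B C I X : Set α} {a b c : α}

lemma contract_ground (M : Matroid α) (C : Set α) : (contract M C).E = M.E \ C := rfl

lemma contract_base_aux :
    (contract M C).IsBase B ↔ M✶.IsBasis ((M.E \ C) \ B) (M.E \ C) ∧ B ⊆ M.E \ C := by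
  rw [contract, Matroid.dual_isBase_iff', Matroid.restrict_ground_eq,
    Matroid.isBase_restrict_iff (show M.E \ C ⊆ M✶.E from diff_subset)]

lemma contract_base_iff (hC : M.Indep C) :
    (contract M C).IsBase B ↔ B ⊆ M.E \ C ∧ M.IsBase (B ∪ C) := by
  have hCE : C ⊆ M.E := hC.subset_ground
  rw [contract_base_aux]
  constructor
  · rintro ⟨hS, hBR⟩
    refine ⟨hBR, ?_⟩
    have hBC : B ∪ C = M.E \ ((M.E \ C) \ B) := by
      ext x
      simp only [mem_union, mem_diff, not_and, not_not]
      constructor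
      · rintro (hxB | hxC)
        · exact ⟨(hBR hxB).1, fun _ => hxB⟩
        · exact ⟨hCE hxC, fun h => absurd hxC h.2⟩
      · rintro ⟨hxE, hx⟩
        by_cases hxC : x ∈ C
        · exact Or.inr hxC
        · exact Or.inl (hx ⟨hxE, hxC⟩)
    rw [hBC, ← Matroid.dual_isBase_iff (show (M.E \ C) \ B ⊆ M.E from diff_subset.trans diff_subset)]
    obtain ⟨B₀, hB₀, hCB₀⟩ := hC.exists_isBase_superset
    exact hB₀.compl_isBase_dual.isBase_of_isBasis_superset
      (show M.E \ B₀ ⊆ M.E \ C from fun x hx => ⟨hx.1, fun hc => hx.2 (hCB₀ hc)⟩) hS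
  · rintro ⟨hBR, hB⟩
    refine ⟨?_, hBR⟩
    have hSeq : (M.E \ C) \ B = M.E \ (B ∪ C) := by
      ext x; simp only [mem_diff, mem_union]; tauto
    have hdb : M✶.IsBase ((M.E \ C) \ B) := by rw [hSeq]; exact hB.compl_isBase_dual
    exact hdb.isBasis_of_subset (show M.E \ C ⊆ M✶.E from diff_subset) diff_subset

lemma contract_indep_iff (hC : M.Indep C) :
    (contract M C).Indep I ↔ I ⊆ M.E \ C ∧ M.Indep (I ∪ C) := by
  constructor
  · intro h
    obtain ⟨B, hB, hIB⟩ := h.exists_isBase_superset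
    rw [contract_base_iff hC] at hB
    exact ⟨hIB.trans hB.1, hB.2.indep.subset (union_subset_union_left _ hIB)⟩
  · rintro ⟨hIR, hIC⟩
    obtain ⟨B, hB, hsub⟩ := hIC.exists_isBase_superset
    have hCB : C ⊆ B := subset_union_right.trans hsub
    have hB' : (contract M C).IsBase (B \ C) := by
      rw [contract_base_iff hC]
      refine ⟨fun x hx => ⟨hB.subset_ground hx.1, hx.2⟩, ?_⟩
      rwa [diff_union_self, union_eq_left.mpr hCB]
    refine hB'.indep.subset (subset_diff.mpr ⟨subset_union_left.trans hsub, ?_⟩)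
    exact disjoint_left.mpr fun {x} hx hxC => (hIR hx).2 hxC

lemma contract_closure_subset (hC : M.Indep C) (hX : X ⊆ M.E \ C) :
    (contract M C).closure X ⊆ M.closure (X ∪ C) := by
  obtain ⟨I, hI⟩ := (contract M C).exists_isBasis X (by rw [contract_ground]; exact hX)
  intro b hb
  rw [← hI.closure_eq_closure] at hb
  have hIN : (contract M C).Indep I := hI.indep
  have hIM := (contract_indep_iff hC).1 hIN
  by_cases hbI : b ∈ I
  · exact M.mem_closure_of_mem' (Or.inl (hI.subset hbI) : b ∈ X ∪ C) ((hIM.1 hbI).1)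
  · have hdep := (hIN.mem_closure_iff_of_notMem hbI).1 hb
    have hbN : b ∈ M.E \ C := by
      rw [← contract_ground (C := C)]; exact hdep.subset_ground (mem_insert _ _)
    have hbIC : b ∉ I ∪ C := by rintro (h | h); exacts [hbI h, hbN.2 h]
    have hMdep : M.Dep (insert b (I ∪ C)) := by
      rw [dep_iff]
      refine ⟨fun hind => ?_, insert_subset hbN.1 hIM.2.subset_ground⟩
      exact hdep.1 ((contract_indep_iff hC).2
        ⟨insert_subset hbN hIM.1, by rwa [insert_union]⟩)
    exact M.closure_subset_closure (union_subset_union_left C hI.subset)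
      ((hIM.2.mem_closure_iff_of_notMem hbIC).2 hMdep)


lemma contract_loop_indep_iff (hcE : c ∈ M.E) (hc : ¬ M.Indep {c}) :
    (contract M {c}).Indep I ↔ I ⊆ M.E \ {c} ∧ M.Indep I := by
  have hcB : ∀ ⦃B⦄, M.IsBase B → c ∉ B :=
    fun B hB hcB => hc (hB.indep.subset (singleton_subset_iff.2 hcB))
  constructor
  · intro h
    obtain ⟨B, hB, hIB⟩ := h.exists_isBase_superset
    rw [contract_base_aux] at hB
    obtain ⟨hS, hBR⟩ := hB
    set S := (M.E \ {c}) \ B with hSdef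
    have hSind : M✶.Indep S := hS.indep
    obtain ⟨B₀, hB₀, hdj⟩ := (Matroid.dual_indep_iff_exists (M := M) hSind.subset_ground).1 hSind
    have hins : M✶.Indep (insert c S) := by
      rw [Matroid.dual_indep_iff_exists (M := M) (insert_subset hcE hSind.subset_ground)]
      refine ⟨B₀, hB₀, disjoint_left.2 fun {y} hy hyB => ?_⟩
      rcases hy with rfl | hyS
      · exact hcB hB₀ hyB
      · exact disjoint_left.1 hdj hyS hyB
    have hbase : M✶.IsBase (insert c S) := by
      rw [Matroid.isBase_iff_maximal_indep]
      refine ⟨hins, fun T hT hsub => ?_⟩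
      intro t ht
      by_contra htn
      have htS : t ∉ S := fun h' => htn (mem_insert_of_mem _ h')
      have htc : t ≠ c := fun h' => htn (h' ▸ mem_insert _ _)
      have hind : M✶.Indep (insert t S) :=
        hT.subset (insert_subset ht ((subset_insert c S).trans hsub))
      exact (hS.insert_dep ⟨⟨hT.subset_ground ht, htc⟩, htS⟩).1 hind
    have hMB : M.IsBase (M.E \ insert c S) := hbase.compl_isBase_of_dual
    have hEq : M.E \ insert c S = B := by
      ext x
      constructor
      · rintro ⟨hxE, hx⟩
        by_contra hxB
        exact hx (mem_insert_of_mem _ ⟨⟨hxE, fun h' => hx (mem_insert_iff.2 (Or.inl h'))⟩, hxB⟩)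
      · intro hxB
        refine ⟨(hBR hxB).1, ?_⟩
        rintro (rfl | hxS)
        · exact (hBR hxB).2 rfl
        · exact hxS.2 hxB
    rw [hEq] at hMB
    exact ⟨hIB.trans hBR, hMB.indep.subset hIB⟩
  · rintro ⟨hIR, hI⟩
    obtain ⟨B₀, hB₀, hIB₀⟩ := hI.exists_isBase_superset
    have hB₀R : B₀ ⊆ M.E \ {c} :=
      fun x hx => ⟨hB₀.subset_ground hx, fun h' => hcB hB₀ (mem_singleton_iff.1 h' ▸ hx)⟩
    have hNB : (contract M {c}).IsBase B₀ := by
      rw [contract_base_aux]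
      refine ⟨?_, hB₀R⟩
      have hS' : M✶.IsBase (M.E \ B₀) := hB₀.compl_isBase_dual
      rw [Matroid.isBasis_iff (show M.E \ {c} ⊆ M✶.E from diff_subset)]
      refine ⟨hS'.indep.subset (fun x hx => ⟨hx.1.1, hx.2⟩), diff_subset,
        fun J hJ hSJ hJR => ?_⟩
      by_contra hne
      obtain ⟨x, hxJ, hxS⟩ := exists_of_ssubset (hSJ.ssubset_of_ne hne)
      have hxB₀ : x ∈ B₀ := by
        by_contra hxB
        exact hxS ⟨hJR hxJ, hxB⟩
      obtain ⟨B₁, hB₁, hdj⟩ := (Matroid.dual_indep_iff_exists (M := M) hJ.subset_ground).1 hJ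
      have hB₁sub : B₁ ⊆ B₀ \ {x} := by
        intro y hy
        have hyJ : y ∉ J := disjoint_right.1 hdj hy
        refine ⟨?_, fun h' => hyJ (mem_singleton_iff.1 h' ▸ hxJ)⟩
        by_contra hyB₀
        exact hyJ (hSJ ⟨⟨hB₁.subset_ground hy, fun h' => hcB hB₁ (mem_singleton_iff.1 h' ▸ hy)⟩, hyB₀⟩)
      have heq := hB₁.eq_of_subset_isBase hB₀ (hB₁sub.trans diff_subset)
      rw [heq] at hB₁sub
      exact (hB₁sub hxB₀).2 rfl
    exact hNB.indep.subset hIB₀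

lemma para_of_contract_para (hc : ¬ M.Indep {c}) (h : Para (contract M {c}) a b) :
    Para M a b := by
  by_cases hcE : c ∈ M.E
  · obtain ⟨ha, hb, hcl⟩ := h
    have ha' := (contract_loop_indep_iff hcE hc).1 ha
    have hb' := (contract_loop_indep_iff hcE hc).1 hb
    refine ⟨ha'.2, hb'.2, ?_⟩
    by_cases hba : b = a
    · subst hba
      exact M.mem_closure_self b (singleton_subset_iff.1 hb'.2.subset_ground)
    · have hbA : b ∉ ({a} : Set α) := fun h' => hba (mem_singleton_iff.1 h')
      have hdep := (ha.mem_closure_iff_of_notMem hbA).1 hcl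
      have hsubR : insert b ({a} : Set α) ⊆ M.E \ {c} := by
        have := hdep.subset_ground
        rwa [contract_ground] at this
      refine (ha'.2.mem_closure_iff_of_notMem hbA).2 ?_
      rw [dep_iff]
      refine ⟨fun hind => hdep.1 ((contract_loop_indep_iff hcE hc).2 ⟨hsubR, hind⟩),
        insert_subset (singleton_subset_iff.1 hb'.2.subset_ground)
          ha'.2.subset_ground⟩
  · have heq : contract M {c} = M := by
      rw [contract, diff_singleton_eq_self hcE, ← Matroid.dual_ground,
        Matroid.restrict_ground_eq_self, Matroid.dual_dual]
    rwa [heq] at h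

/-- Ground set of a tower. -/
def tG (n : ℕ) (e : Finset ℕ → α) : Set α :=
  {a | ∃ X : Finset ℕ, X.Nonempty ∧ X ⊆ Finset.Icc 1 n ∧ a = e X}

/-- Joints of a tower. -/
def tJ (n : ℕ) (e : Finset ℕ → α) : Set α :=
  {a | ∃ i ∈ Finset.Icc 1 n, a = e {i}}

theorem tower_key : ∀ (n : ℕ) (M : Matroid α) (e : Finset ℕ → α), IsTower M n e →
    tJ n e ⊆ tG n e ∧ tG n e ⊆ M.E ∧ M.Indep (tJ n e) ∧
      tG n e ⊆ M.closure (tJ n e) ∧ (tJ n e).encard = n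
  | 0, _, _, hT => absurd hT id
  | 1, M, e, hT => by
    have hI : M.Indep {e {1}} := hT
    have hsing : ∀ X : Finset ℕ, X.Nonempty → X ⊆ Finset.Icc 1 1 → X = {1} := by
      intro X hne hsub
      rw [Finset.Icc_self] at hsub
      exact (Finset.subset_singleton_iff.1 hsub).resolve_left (Finset.nonempty_iff_ne_empty.1 hne)
    have hG : tG 1 e = {e {1}} := by
      ext a
      simp only [tG, mem_setOf_eq, mem_singleton_iff]
      constructor
      · rintro ⟨X, hne, hsub, rfl⟩; rw [hsing X hne hsub]
      · rintro rfl
        exact ⟨{1}, Finset.singleton_nonempty 1, by rw [Finset.Icc_self], rfl⟩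
    have hJ : tJ 1 e = {e {1}} := by
      ext a
      simp only [tJ, mem_setOf_eq, mem_singleton_iff, Finset.mem_Icc]
      constructor
      · rintro ⟨i, hi, rfl⟩
        have : i = 1 := by omega
        rw [this]
      · rintro rfl
        exact ⟨1, ⟨le_rfl, le_rfl⟩, rfl⟩
    rw [hG, hJ]
    exact ⟨subset_rfl, hI.subset_ground, hI,
      M.subset_closure _ hI.subset_ground, by simp⟩
  | (n+2), M, e, hT => by
    obtain ⟨h1, h2, hTM, hTN, hTMins, hTNins⟩ := hT
    have hc : M.Indep {e {n+2}} := by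
      by_contra hc
      obtain ⟨X, hXne, hXsub, hnp⟩ := h2
      exact hnp (para_of_contract_para hc (h1 X hXne hXsub))
    obtain ⟨hJG', hGE', hJind', hGcl', hJcard'⟩ :=
      tower_key (n+1) (contract M {e {n+2}}) e hTN
    obtain ⟨-, hGE'', -, -, -⟩ :=
      tower_key (n+1) (contract M {e {n+2}}) (fun X => e (insert (n+2) X)) hTNins
    have hcE : e {n+2} ∈ M.E := singleton_subset_iff.1 hc.subset_ground
    have hJ'R : tJ (n+1) e ⊆ M.E \ {e {n+2}} := hJG'.trans hGE'
    have hJeq : tJ (n+2) e = insert (e {n+2}) (tJ (n+1) e) := by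
      ext a
      simp only [tJ, mem_setOf_eq, mem_insert_iff, Finset.mem_Icc]
      constructor
      · rintro ⟨i, ⟨h1i, h2i⟩, rfl⟩
        rcases eq_or_ne i (n+2) with rfl | hne
        · exact Or.inl rfl
        · exact Or.inr ⟨i, ⟨h1i, by omega⟩, rfl⟩
      · rintro (rfl | ⟨i, ⟨h1i, h2i⟩, rfl⟩)
        · exact ⟨n+2, ⟨by omega, le_rfl⟩, rfl⟩
        · exact ⟨i, ⟨h1i, by omega⟩, rfl⟩
    have hGeq : tG (n+2) e =
        insert (e {n+2}) (tG (n+1) e ∪ tG (n+1) (fun X => e (insert (n+2) X))) := by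
      ext a
      simp only [tG, mem_setOf_eq, mem_insert_iff, mem_union]
      constructor
      · rintro ⟨X, hXne, hXsub, rfl⟩
        by_cases hmem : (n+2) ∈ X
        · by_cases hY : (X.erase (n+2)).Nonempty
          · refine Or.inr (Or.inr ⟨X.erase (n+2), hY, ?_, ?_⟩)
            · intro x hx
              have hx' := hXsub (Finset.mem_of_mem_erase hx)
              have hxne := Finset.ne_of_mem_erase hx
              rw [Finset.mem_Icc] at hx' ⊢
              omega
            · rw [Finset.insert_erase hmem]
          · left
            have hXs : X = {n+2} := by
              apply Finset.Subset.antisymm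
              · intro x hx
                rw [Finset.mem_singleton]
                by_contra hxx
                exact absurd (Finset.mem_erase.2 ⟨hxx, hx⟩)
                  (by rw [Finset.not_nonempty_iff_eq_empty.1 hY]; exact Finset.notMem_empty x)
              · exact Finset.singleton_subset_iff.2 hmem
            rw [hXs]
        · refine Or.inr (Or.inl ⟨X, hXne, ?_, rfl⟩)
          intro x hx
          have hx' := hXsub hx
          have : x ≠ n+2 := fun h' => hmem (h' ▸ hx)
          rw [Finset.mem_Icc] at hx' ⊢
          omega
      · rintro (rfl | ⟨X, hXne, hXsub, rfl⟩ | ⟨X, hXne, hXsub, rfl⟩)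
        · exact ⟨{n+2}, Finset.singleton_nonempty _,
            Finset.singleton_subset_iff.2 (Finset.mem_Icc.2 ⟨by omega, le_rfl⟩), rfl⟩
        · exact ⟨X, hXne, hXsub.trans (Finset.Icc_subset_Icc le_rfl (by omega)), rfl⟩
        · exact ⟨insert (n+2) X, Finset.insert_nonempty _ _,
            Finset.insert_subset_iff.2 ⟨Finset.mem_Icc.2 ⟨by omega, le_rfl⟩,
              hXsub.trans (Finset.Icc_subset_Icc le_rfl (by omega))⟩, rfl⟩
    have hNsub : (contract M {e {n+2}}).E ⊆ M.E := by
      rw [contract_ground]; exact diff_subset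
    have hcl' : (contract M {e {n+2}}).closure (tJ (n+1) e) ⊆
        M.closure (insert (e {n+2}) (tJ (n+1) e)) := by
      have h := contract_closure_subset (M := M) hc hJ'R
      rwa [union_singleton] at h
    refine ⟨?_, ?_, ?_, ?_, ?_⟩
    · rw [hJeq, hGeq]
      exact insert_subset_insert (hJG'.trans subset_union_left)
    · rw [hGeq]
      exact insert_subset hcE (union_subset (hGE'.trans hNsub) (hGE''.trans hNsub))
    · rw [hJeq]
      have h := (contract_indep_iff hc).1 hJind'
      rw [union_singleton] at h
      exact h.2
    · rw [hGeq, hJeq]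
      refine insert_subset (M.mem_closure_of_mem' (mem_insert _ _) hcE) (union_subset ?_ ?_)
      · exact fun a ha => hcl' (hGcl' ha)
      · rintro a ⟨X, hXne, hXsub, rfl⟩
        have hp := h1 X hXne hXsub
        have hax := hp.2.2
        have hEX : e X ∈ (contract M {e {n+2}}).closure (tJ (n+1) e) :=
          hGcl' ⟨X, hXne, hXsub, rfl⟩
        have hsub : (contract M {e {n+2}}).closure {e X} ⊆
            (contract M {e {n+2}}).closure (tJ (n+1) e) :=
          Matroid.closure_subset_closure_of_subset_closure (singleton_subset_iff.2 hEX)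
        exact hcl' (hsub hax)
    · rw [hJeq, encard_insert_of_notMem (fun h' => (hJ'R h').2 rfl), hJcard']
      norm_cast

theorem statement15 {α : Type*} (n : ℕ) (hn : 1 ≤ n) (M : Matroid α)
    (e : Finset ℕ → α) (hT : IsTower M n e) :
    rk (M ↾ {a | ∃ X : Finset ℕ, X.Nonempty ∧ X ⊆ Finset.Icc 1 n ∧ a = e X}) = n ∧
      (M ↾ {a | ∃ X : Finset ℕ, X.Nonempty ∧ X ⊆ Finset.Icc 1 n ∧ a = e X}).IsBase
        {a | ∃ i ∈ Finset.Icc 1 n, a = e {i}} := by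
  obtain ⟨hJG, hGE, hJind, hGcl, hJcard⟩ := tower_key n M e hT
  have hbasis : M.IsBasis (tJ n e) (tG n e) :=
    hJind.isBasis_of_subset_of_subset_closure hJG hGcl
  have hJn : (tJ n e).ncard = n := by
    rw [Set.ncard_def, hJcard]; rfl
  have hub : ∀ p ∈ {p | ∃ I, (M ↾ tG n e).Indep I ∧ I.ncard = p}, p ≤ n := by
    rintro p ⟨I, hI, rfl⟩
    rw [Matroid.restrict_indep_iff] at hI
    obtain ⟨I', hI', hII'⟩ := hI.1.subset_isBasis_of_subset hI.2 hGE
    have h1 : I.encard ≤ (n : ℕ∞) := by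
      rw [← hJcard, ← hI'.encard_eq_encard hbasis]
      exact encard_mono hII'
    obtain ⟨hfin, n₀, hn₀, hle⟩ := Set.encard_le_coe_iff.1 h1
    rw [Set.ncard_def, hn₀]
    simpa using hle
  constructor
  · show sSup {p | ∃ I, (M ↾ tG n e).Indep I ∧ I.ncard = p} = n
    have hmem : n ∈ {p | ∃ I, (M ↾ tG n e).Indep I ∧ I.ncard = p} :=
      ⟨tJ n e, Matroid.restrict_indep_iff.2 ⟨hJind, hJG⟩, hJn⟩
    exact le_antisymm (csSup_le ⟨n, hmem⟩ hub) (le_csSup ⟨n, hub⟩ hmem)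
  · show (M ↾ tG n e).IsBase (tJ n e)
    rw [Matroid.isBase_restrict_iff hGE]
    exact hbasis

end Paper
end
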